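/- arXiv:2001.01154 — 3 statements merged into one kernel-verified Lean document; each statement's English description precedes it below -/
import Mathlib

section
/- Asymptotic angle bound for shortest paths to a compact set, lower curvature bound (Lemma 4.3, curvature ≥ 0 case). Let X be a proper metric space in which every pair of points is joined by a unit-speed shortest path and in which every point has a neighborhood that is a region of curvature ≥ 0. Let K ⊆ X be compact and nonempty, let γ : [0,T] → X be a unit-speed geodesic with γ(0) ∉ K, and write ℓ(t) := Metric.infDist (γ(t)) K. Let tₙ ∈ (0,T] with tₙ → 0, and for each n let σₙ : [0,1] → X be a constant-speed shortest path from γ(tₙ) to K, meaning dist(σₙ(u), σₙ(v)) = ℓ(tₙ)·|u − v| for all u, v ∈ [0,1], σₙ(0) = γ(tₙ), and σₙ(1) ∈ K; similarly let σ₀ : [0,1] → X be a constant-speed shortest path from γ(0) to K with speed ℓ(0). Suppose σₙ → σ₀ uniformly on [0,1]. Let σ̂₀ : [0, ℓ(0)] → X, σ̂₀(r) = σ₀(r/ℓ(0)), be the unit-speed reparameterization of σ₀. Then there exists s' > 0 such that for every s ∈ (0, s'], limsup_{n→∞} ∠⁰_{γ(tₙ)}(γ(0), σₙ(s/ℓ(tₙ)))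 ≤ π − ∠⁺(γ, σ̂₀) (the comparison angles being defined for all sufficiently large n, since ℓ(tₙ) → ℓ(0) > 0). -/
open Filter Topology Metric Set

noncomputable section

/-- `γ` is a unit-speed geodesic (shortest path) on the interval `[0, T]`:
the distance between any two of its points equals the parameter difference. -/
def IsUnitSpeedGeodesicOn {X : Type*} [MetricSpace X] (γ : ℝ → X) (T : ℝ) : Prop :=
  ∀ t ∈ Set.Icc (0:ℝ) T, ∀ t' ∈ Set.Icc (0:ℝ) T, dist (γ t) (γ t') = |t - t'|

/-- The Euclidean comparison angle `∠⁰_p(x, y)` at the vertex `p`. -/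
def compAngle {X : Type*} [MetricSpace X] (p x y : X) : ℝ :=
  Real.arccos ((dist p x ^ 2 + dist p y ^ 2 - dist x y ^ 2) /
    (2 * dist p x * dist p y))

/-- The upper angle `∠⁺(γ, η)` between two geodesics with `γ 0 = η 0`:
the limsup of comparison angles `∠⁰_{γ 0}(γ t, η s)` as `(t, s) → (0⁺, 0⁺)`. -/
def upperAngle {X : Type*} [MetricSpace X] (γ η : ℝ → X) : ℝ :=
  Filter.limsup (fun ts : ℝ × ℝ => compAngle (γ 0) (γ ts.1) (η ts.2))
    ((𝓝[>] (0:ℝ)) ×ˢ (𝓝[>] (0:ℝ)))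

/-- The lower angle `∠⁻(γ, η)`: liminf of comparison angles. -/
def lowerAngle {X : Type*} [MetricSpace X] (γ η : ℝ → X) : ℝ :=
  Filter.liminf (fun ts : ℝ × ℝ => compAngle (γ 0) (γ ts.1) (η ts.2))
    ((𝓝[>] (0:ℝ)) ×ˢ (𝓝[>] (0:ℝ)))

/-- `U` is a region of curvature bounded by `0` in the comparison sense, where
`rel` is `≤` (curvature `≤ 0`) or `≥` (curvature `≥ 0`): any two points of `U`
are joined by a unit-speed shortest path with image in `U`, and for every
geodesic triangle contained in `U` and every Euclidean comparison triangle,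
distances between pairs of points on the sides are related by `rel` to the
distances between the corresponding comparison points. -/
def IsCurvRegion {X : Type*} [MetricSpace X] (rel : ℝ → ℝ → Prop) (U : Set X) : Prop :=
  (∀ x ∈ U, ∀ y ∈ U, ∃ γ : ℝ → X, IsUnitSpeedGeodesicOn γ (dist x y) ∧
    γ 0 = x ∧ γ (dist x y) = y ∧ ∀ t ∈ Set.Icc (0:ℝ) (dist x y), γ t ∈ U) ∧
  (∀ x ∈ U, ∀ y ∈ U, ∀ z ∈ U, ∀ p : Fin 3 → ℝ → X,
    (∀ i, IsUnitSpeedGeodesicOn (p i) (![dist x y, dist x z, dist y z] i) ∧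
      p i 0 = (![(x, y), (x, z), (y, z)] i).1 ∧
      p i (![dist x y, dist x z, dist y z] i) = (![(x, y), (x, z), (y, z)] i).2 ∧
      ∀ t ∈ Set.Icc (0:ℝ) (![dist x y, dist x z, dist y z] i), p i t ∈ U) →
    ∀ xb yb zb : EuclideanSpace ℝ (Fin 2),
      dist xb yb = dist x y → dist xb zb = dist x z → dist yb zb = dist y z →
      ∀ i j : Fin 3, ∀ a b : ℝ,
        a ∈ Set.Icc (0:ℝ) (![dist x y, dist x z, dist y z] i) →
        b ∈ Set.Icc (0:ℝ) (![dist x y, dist x z, dist y z] j) →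
        rel (dist (p i a) (p j b))
          (dist
            (![fun c : ℝ => AffineMap.lineMap xb yb (c / dist x y),
               fun c : ℝ => AffineMap.lineMap xb zb (c / dist x z),
               fun c : ℝ => AffineMap.lineMap yb zb (c / dist y z)] i a)
            (![fun c : ℝ => AffineMap.lineMap xb yb (c / dist x y),
               fun c : ℝ => AffineMap.lineMap xb zb (c / dist x z),
               fun c : ℝ => AffineMap.lineMap yb zb (c / dist y z)] j b)))

/-- A region of curvature `≤ 0`. -/
def IsCurvLeRegion {X : Type*} [MetricSpace X] (U : Set X) : Prop :=
  IsCurvRegion (· ≤ ·) U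

/-- A region of curvature `≥ 0`. -/
def IsCurvGeRegion {X : Type*} [MetricSpace X] (U : Set X) : Prop :=
  IsCurvRegion (· ≥ ·) U

end


lemma arccos_antitone : Antitone Real.arccos := by
  intro a b h
  simp only [Real.arccos_eq_pi_div_two_sub_arcsin]
  have := Real.monotone_arcsin h
  linarith

lemma arccos_add_arccos_le_pi {r₁ r₂ : ℝ} (h : 0 ≤ r₁ + r₂) :
    Real.arccos r₁ + Real.arccos r₂ ≤ Real.pi := by
  have h1 : Real.arccos r₁ ≤ Real.arccos (-r₂) := arccos_antitone (by linarith)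
  rw [Real.arccos_neg] at h1
  linarith

/-- Existence of a Euclidean comparison triangle. -/
lemma exists_comparison_triangle {X : Type*} [MetricSpace X] (x y z : X) :
    ∃ P Q R : EuclideanSpace ℝ (Fin 2), dist P Q = dist x y ∧ dist P R = dist x z ∧
      dist Q R = dist y z := by
  set a := dist x y with ha
  set b := dist x z with hb
  set c := dist y z with hc
  have h1 : c ≤ a + b := by rw [ha, hb, hc, dist_comm x y]; exact dist_triangle y x z
  have h2 : b ≤ a + c := by rw [ha, hb, hc]; exact dist_triangle x y z
  have h3 : a ≤ b + c := by rw [ha, hb, hc, dist_comm y z]; exact dist_triangle x z y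
  have ha0 : 0 ≤ a := dist_nonneg
  have hb0 : 0 ≤ b := dist_nonneg
  have hc0 : 0 ≤ c := dist_nonneg
  clear_value a b c
  clear ha hb hc
  rcases eq_or_lt_of_le ha0 with hA | hA
  · -- a = 0, then b = c
    have hbc : b = c := le_antisymm (by linarith) (by linarith)
    refine ⟨(WithLp.equiv 2 _).symm ![0, 0], (WithLp.equiv 2 _).symm ![0, 0],
      (WithLp.equiv 2 _).symm ![b, 0], ?_, ?_, ?_⟩ <;>
      simp [EuclideanSpace.dist_eq, Fin.sum_univ_two, Real.dist_eq, ← hA, ← hbc,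
        abs_of_nonneg hb0, Real.sqrt_sq hb0]
  · set t : ℝ := (a^2 + b^2 - c^2) / (2*a) with ht
    have hkey : t^2 ≤ b^2 := by
      rw [ht, div_pow, div_le_iff₀ (by positivity)]
      nlinarith [mul_nonneg (mul_nonneg (by linarith : (0:ℝ) ≤ a+b-c) (by linarith : (0:ℝ) ≤ a+b+c)) (mul_nonneg (by linarith : (0:ℝ) ≤ c-a+b) (by linarith : (0:ℝ) ≤ c+a-b))]
    set s : ℝ := Real.sqrt (b^2 - t^2) with hs
    have hs2 : s^2 = b^2 - t^2 := Real.sq_sqrt (by linarith)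
    refine ⟨(WithLp.equiv 2 _).symm ![0, 0], (WithLp.equiv 2 _).symm ![a, 0],
      (WithLp.equiv 2 _).symm ![t, s], ?_, ?_, ?_⟩
    · simp [EuclideanSpace.dist_eq, Fin.sum_univ_two, Real.dist_eq, abs_of_nonneg ha0,
        Real.sqrt_sq_eq_abs]
    · rw [EuclideanSpace.dist_eq]
      simp only [WithLp.equiv_symm_apply, WithLp.ofLp_toLp, Fin.sum_univ_two, Matrix.cons_val_zero,
        Matrix.cons_val_one, Matrix.head_cons, Real.dist_eq]
      rw [show |(0:ℝ) - t|^2 + |(0:ℝ) - s|^2 = b^2 by rw [sq_abs, sq_abs]; nlinarith]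
      exact Real.sqrt_sq hb0
    · rw [EuclideanSpace.dist_eq]
      simp only [WithLp.equiv_symm_apply, WithLp.ofLp_toLp, Fin.sum_univ_two, Matrix.cons_val_zero,
        Matrix.cons_val_one, Matrix.head_cons, Real.dist_eq]
      rw [show |a - t|^2 + |(0:ℝ) - s|^2 = c^2 by
        rw [sq_abs, sq_abs]
        have : 2*a*t = a^2+b^2-c^2 := by rw [ht]; field_simp
        nlinarith]
      exact Real.sqrt_sq hc0



/-- Distance from a point to a point on a line, in an inner product space. -/
lemma dist_lineMap_sq {E : Type*} [NormedAddCommGroup E] [InnerProductSpace ℝ E]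
    (x z y : E) (lam : ℝ) :
    dist x (AffineMap.lineMap z y lam) ^ 2 =
      dist x z ^ 2 + lam^2 * dist z y ^ 2 - lam * (dist x z ^2 + dist z y ^2 - dist x y ^2) := by
  have hl : (AffineMap.lineMap z y lam : E) = z + lam • (y - z) := by
    rw [AffineMap.lineMap_apply_module]
    module
  rw [hl]
  have h1 : x - (z + lam • (y - z)) = (x - z) - lam • (y - z) := by abel
  rw [dist_eq_norm, dist_eq_norm, dist_eq_norm, dist_eq_norm, h1]
  have e1 : ‖(x-z) - lam • (y-z)‖^2 = ‖x-z‖^2 - 2 * (lam * inner ℝ (x-z) (y-z)) + lam^2 * ‖y-z‖^2 := by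
    rw [norm_sub_sq_real, real_inner_smul_right, norm_smul]
    rw [mul_pow, Real.norm_eq_abs, sq_abs]
  have e2 : ‖x - y‖^2 = ‖x-z‖^2 - 2 * inner ℝ (x-z) (y-z) + ‖y-z‖^2 := by
    have : x - y = (x-z) - (y-z) := by abel
    rw [this, norm_sub_sq_real]
  have e3 : ‖z - y‖ = ‖y - z‖ := norm_sub_rev _ _
  rw [e1, e3]
  linear_combination (-lam) * e2

lemma arccos_antitone' : Antitone Real.arccos := by
  intro a b h
  simp only [Real.arccos_eq_pi_div_two_sub_arcsin]
  have := Real.monotone_arcsin h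
  linarith

/-- Step-1 hinge monotonicity, analytic part. -/
lemma alg1 {A s u B E D : ℝ} (hA : 0 < A) (hs : 0 < s) (hu : 0 < u)
    (hE : E^2 = A^2 + (u/s)^2 * s^2 - (u/s) * (A^2 + s^2 - B^2))
    (hED : E ≤ D) (hE0 : 0 ≤ E) :
    Real.arccos ((A^2 + s^2 - B^2) / (2*A*s)) ≤ Real.arccos ((A^2 + u^2 - D^2) / (2*A*u)) := by
  apply arccos_antitone'
  have hD2 : E^2 ≤ D^2 := by nlinarith
  have h2 : (A^2 + u^2 - D^2) ≤ (u/s) * (A^2 + s^2 - B^2) := by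
    have : (u/s)^2 * s^2 = u^2 := by field_simp
    nlinarith
  calc (A^2 + u^2 - D^2) / (2*A*u) ≤ ((u/s) * (A^2 + s^2 - B^2)) / (2*A*u) := by
        apply div_le_div_of_nonneg_right h2 (by positivity) |>.trans_eq rfl
    _ = (A^2 + s^2 - B^2) / (2*A*s) := by field_simp

/-- Step-2 adjacent angles, analytic part (via Stewart's identity). -/
lemma alg2 {a t D b c e : ℝ} (ha : 0 < a) (ht : 0 < t) (hD : 0 < D)
    (he : e^2 = b^2 + (a/(a+t))^2 * (a+t)^2 - (a/(a+t)) * (b^2 + (a+t)^2 - c^2))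
    (heD : e ≤ D) (he0 : 0 ≤ e) :
    Real.arccos ((a^2 + D^2 - b^2) / (2*a*D)) + Real.arccos ((t^2 + D^2 - c^2) / (2*t*D))
      ≤ Real.pi := by
  have hat : (0:ℝ) < a + t := by linarith
  have hD2 : e^2 ≤ D^2 := by nlinarith
  have key : 0 ≤ t * (a^2 + D^2 - b^2) + a * (t^2 + D^2 - c^2) := by
    have he' : (a+t) * e^2 = t*b^2 + a*c^2 - a*t*(a+t) := by
      field_simp at he
      nlinarith [he]
    nlinarith
  have hsum : 0 ≤ (a^2 + D^2 - b^2) / (2*a*D) + (t^2 + D^2 - c^2) / (2*t*D) := by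
    rw [div_add_div _ _ (by positivity) (by positivity)]
    apply div_nonneg _ (by positivity)
    nlinarith
  have h1 : Real.arccos ((a^2 + D^2 - b^2) / (2*a*D)) ≤
      Real.arccos (-((t^2 + D^2 - c^2) / (2*t*D))) := arccos_antitone' (by linarith)
  rw [Real.arccos_neg] at h1
  linarith

lemma step_main {X : Type*} [MetricSpace X] {U : Set X} (hU : IsCurvGeRegion U)
    (γ : ℝ → X) (T : ℝ) (hγ : IsUnitSpeedGeodesicOn γ T)
    (σ : ℝ → X) (L : ℝ) (hL : 0 < L)
    (hσ : ∀ u ∈ Set.Icc (0:ℝ) 1, ∀ v ∈ Set.Icc (0:ℝ) 1, dist (σ u) (σ v) = L * |u - v|)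
    (t0 t u s : ℝ) (hσz : σ 0 = γ t0)
    (ht0 : 0 < t0) (ht : 0 < t) (hu : 0 < u) (hus : u ≤ s) (hsL : s < L)
    (ht0T : t0 + t ≤ T) (ht0u : t0 < u)
    (hU1 : ∀ r ∈ Set.Icc (0:ℝ) (t0 + t), γ r ∈ U)
    (hU2 : ∀ c ∈ Set.Icc (0:ℝ) s, σ (c / L) ∈ U) :
    compAngle (γ t0) (γ 0) (σ (s / L)) ≤
      Real.pi - compAngle (γ t0) (γ (t0 + t)) (σ (u / L)) := by
  obtain ⟨hUgeo, hUcomp⟩ := hU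
  have hs : 0 < s := lt_of_lt_of_le hu hus
  have hT0 : (0:ℝ) ≤ T := le_trans (by linarith) ht0T
  have h0T : (0:ℝ) ∈ Set.Icc (0:ℝ) T := ⟨le_rfl, hT0⟩
  have ht0T' : t0 ∈ Set.Icc (0:ℝ) T := ⟨ht0.le, by linarith⟩
  have htt : t0 + t ∈ Set.Icc (0:ℝ) T := ⟨by linarith, ht0T⟩
  have hd_z_x : dist (γ t0) (γ 0) = t0 := by
    rw [hγ t0 ht0T' 0 h0T, sub_zero, abs_of_pos ht0]
  have hd_x_w : dist (γ 0) (γ (t0+t)) = t0 + t := by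
    rw [hγ 0 h0T _ htt, zero_sub, abs_neg, abs_of_pos (by linarith)]
  have hd_z_w : dist (γ t0) (γ (t0+t)) = t := by
    rw [hγ _ ht0T' _ htt]
    rw [show t0 - (t0+t) = -t by ring, abs_neg, abs_of_pos ht]
  have hmem : ∀ c ∈ Set.Icc (0:ℝ) s, c / L ∈ Set.Icc (0:ℝ) 1 := by
    intro c hc
    exact ⟨div_nonneg hc.1 hL.le, (div_le_one hL).mpr (le_of_lt (lt_of_le_of_lt hc.2 hsL))⟩
  have hdσ : ∀ c ∈ Set.Icc (0:ℝ) s, dist (γ t0) (σ (c/L)) = c := by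
    intro c hc
    rw [← hσz, hσ 0 ⟨le_rfl, zero_le_one⟩ _ (hmem c hc), zero_sub, abs_neg,
      abs_of_nonneg (div_nonneg hc.1 hL.le), mul_div_cancel₀ _ hL.ne']
  set ys := σ (s / L) with hysdef
  set yu := σ (u / L) with hyudef
  have hs_mem : s ∈ Set.Icc (0:ℝ) s := ⟨hs.le, le_rfl⟩
  have hu_mem : u ∈ Set.Icc (0:ℝ) s := ⟨hu.le, hus⟩
  have hys_mem : ys ∈ U := hU2 s hs_mem
  have hyu_mem : yu ∈ U := hU2 u hu_mem
  have hz_mem : γ t0 ∈ U := hU1 t0 ⟨ht0.le, by linarith⟩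
  have hx_mem : γ 0 ∈ U := hU1 0 ⟨le_rfl, by linarith⟩
  have hw_mem : γ (t0+t) ∈ U := hU1 _ ⟨by linarith, le_rfl⟩
  have hdzys : dist (γ t0) ys = s := hdσ s hs_mem
  have hdzyu : dist (γ t0) yu = u := hdσ u hu_mem
  have hbpos : 0 < dist (γ 0) yu := by
    have h1 : dist (γ t0) yu ≤ dist (γ t0) (γ 0) + dist (γ 0) yu := dist_triangle _ _ _
    rw [hdzyu, hd_z_x] at h1
    linarith
  -- Step 1 : hinge monotonicity along σ
  have step1 : compAngle (γ t0) (γ 0) ys ≤ compAngle (γ t0) (γ 0) yu := by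
    obtain ⟨g, hg_geo, hg0, hg1, hgU⟩ := hUgeo (γ 0) hx_mem ys hys_mem
    obtain ⟨Pb, Qb, Rb, e1, e2, e3⟩ := exists_comparison_triangle (γ t0) (γ 0) ys
    have hp : ∀ i, IsUnitSpeedGeodesicOn ((![fun r => γ (t0 - r), fun r => σ (r / L), g]) i)
          (![dist (γ t0) (γ 0), dist (γ t0) ys, dist (γ 0) ys] i) ∧
        (![fun r => γ (t0 - r), fun r => σ (r / L), g]) i 0 =
          ((![(γ t0, γ 0), (γ t0, ys), (γ 0, ys)]) i).1 ∧
        (![fun r => γ (t0 - r), fun r => σ (r / L), g]) i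
            (![dist (γ t0) (γ 0), dist (γ t0) ys, dist (γ 0) ys] i) =
          ((![(γ t0, γ 0), (γ t0, ys), (γ 0, ys)]) i).2 ∧
        ∀ r ∈ Set.Icc (0:ℝ) (![dist (γ t0) (γ 0), dist (γ t0) ys, dist (γ 0) ys] i),
          (![fun r => γ (t0 - r), fun r => σ (r / L), g]) i r ∈ U := by
      intro i
      fin_cases i
      · refine ⟨?_, ?_, ?_, ?_⟩
        · show IsUnitSpeedGeodesicOn (fun r => γ (t0 - r)) (dist (γ t0) (γ 0))
          rw [hd_z_x]
          intro r hr r' hr'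
          show dist (γ (t0 - r)) (γ (t0 - r')) = |r - r'|
          rw [hγ _ ⟨by linarith [hr.2], by linarith [hr.1]⟩
            _ ⟨by linarith [hr'.2], by linarith [hr'.1]⟩]
          rw [show t0 - r - (t0 - r') = -(r - r') by ring, abs_neg]
        · show γ (t0 - 0) = γ t0
          rw [sub_zero]
        · show (fun r => γ (t0 - r)) (dist (γ t0) (γ 0)) = γ 0
          rw [hd_z_x]
          show γ (t0 - t0) = γ 0
          rw [sub_self]
        · show ∀ r ∈ Set.Icc (0:ℝ) (dist (γ t0) (γ 0)), γ (t0 - r) ∈ U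
          rw [hd_z_x]
          intro r hr
          exact hU1 (t0 - r) ⟨by linarith [hr.2], by linarith [hr.1]⟩
      · refine ⟨?_, ?_, ?_, ?_⟩
        · show IsUnitSpeedGeodesicOn (fun r => σ (r / L)) (dist (γ t0) ys)
          rw [hdzys]
          intro r hr r' hr'
          show dist (σ (r / L)) (σ (r' / L)) = |r - r'|
          rw [hσ _ (hmem r hr) _ (hmem r' hr'), div_sub_div_same, abs_div,
            abs_of_pos hL, mul_div_cancel₀ _ hL.ne']
        · show σ (0 / L) = γ t0
          rw [zero_div, hσz]
        · show (fun r => σ (r / L)) (dist (γ t0) ys) = ys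
          rw [hdzys]
        · show ∀ r ∈ Set.Icc (0:ℝ) (dist (γ t0) ys), σ (r / L) ∈ U
          rw [hdzys]
          exact fun r hr => hU2 r hr
      · exact ⟨hg_geo, hg0, hg1, hgU⟩
    have hcomp := hUcomp (γ t0) hz_mem (γ 0) hx_mem ys hys_mem _ hp Pb Qb Rb e1 e2 e3
      1 0 u t0
      (by show u ∈ Set.Icc (0:ℝ) (dist (γ t0) ys); rw [hdzys]; exact ⟨hu.le, hus⟩)
      (by show t0 ∈ Set.Icc (0:ℝ) (dist (γ t0) (γ 0)); rw [hd_z_x]; exact ⟨ht0.le, le_rfl⟩)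
    simp only [Matrix.cons_val_one, Matrix.head_cons, Matrix.cons_val_zero] at hcomp
    rw [hd_z_x, hdzys, div_self ht0.ne', AffineMap.lineMap_apply_one, sub_self] at hcomp
    -- hcomp : dist (σ (u / L)) (γ 0) ≥ dist (lineMap Pb Rb (u/s)) Qb
    have hE := dist_lineMap_sq Qb Pb Rb (u/s)
    rw [dist_comm Qb Pb, e1, e2, e3, hd_z_x, hdzys] at hE
    have key := alg1 (A := t0) (B := dist (γ 0) ys) (D := dist (γ 0) yu)
      ht0 hs hu hE (by rw [dist_comm]; exact le_trans (le_of_eq rfl) (by rw [dist_comm (γ 0) yu]; exact hcomp)) dist_nonneg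
    simpa only [compAngle, hd_z_x, hdzys, hdzyu] using key
  -- Step 2 : adjacent angles at γ t0 on the geodesic γ
  have step2 : compAngle (γ t0) (γ 0) yu ≤
      Real.pi - compAngle (γ t0) (γ (t0 + t)) yu := by
    obtain ⟨g1, hg1_geo, hg10, hg11, hg1U⟩ := hUgeo (γ 0) hx_mem yu hyu_mem
    obtain ⟨g2, hg2_geo, hg20, hg21, hg2U⟩ := hUgeo (γ (t0+t)) hw_mem yu hyu_mem
    obtain ⟨Pb, Qb, Rb, e1, e2, e3⟩ := exists_comparison_triangle (γ 0) (γ (t0+t)) yu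
    have hp : ∀ i, IsUnitSpeedGeodesicOn ((![γ, g1, g2]) i)
          (![dist (γ 0) (γ (t0+t)), dist (γ 0) yu, dist (γ (t0+t)) yu] i) ∧
        (![γ, g1, g2]) i 0 = ((![(γ 0, γ (t0+t)), (γ 0, yu), (γ (t0+t), yu)]) i).1 ∧
        (![γ, g1, g2]) i
            (![dist (γ 0) (γ (t0+t)), dist (γ 0) yu, dist (γ (t0+t)) yu] i) =
          ((![(γ 0, γ (t0+t)), (γ 0, yu), (γ (t0+t), yu)]) i).2 ∧
        ∀ r ∈ Set.Icc (0:ℝ) (![dist (γ 0) (γ (t0+t)), dist (γ 0) yu, dist (γ (t0+t)) yu] i),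
          (![γ, g1, g2]) i r ∈ U := by
      intro i
      fin_cases i
      · refine ⟨?_, rfl, ?_, ?_⟩
        · show IsUnitSpeedGeodesicOn γ (dist (γ 0) (γ (t0+t)))
          rw [hd_x_w]
          intro r hr r' hr'
          exact hγ r ⟨hr.1, le_trans hr.2 ht0T⟩ r' ⟨hr'.1, le_trans hr'.2 ht0T⟩
        · show γ (dist (γ 0) (γ (t0+t))) = γ (t0+t)
          rw [hd_x_w]
        · show ∀ r ∈ Set.Icc (0:ℝ) (dist (γ 0) (γ (t0+t))), γ r ∈ U
          rw [hd_x_w]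
          exact hU1
      · exact ⟨hg1_geo, hg10, hg11, hg1U⟩
      · exact ⟨hg2_geo, hg20, hg21, hg2U⟩
    have hcomp := hUcomp (γ 0) hx_mem (γ (t0+t)) hw_mem yu hyu_mem _ hp Pb Qb Rb e1 e2 e3
      0 1 t0 (dist (γ 0) yu)
      (by show t0 ∈ Set.Icc (0:ℝ) (dist (γ 0) (γ (t0+t))); rw [hd_x_w]; exact ⟨ht0.le, by linarith⟩)
      (⟨dist_nonneg, le_rfl⟩)
    simp only [Matrix.cons_val_one, Matrix.head_cons, Matrix.cons_val_zero] at hcomp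
    rw [hg11, div_self hbpos.ne', AffineMap.lineMap_apply_one, hd_x_w] at hcomp
    -- hcomp : dist (γ t0) yu ≥ dist (lineMap Pb Qb (t0/(t0+t))) Rb
    have hE := dist_lineMap_sq Rb Pb Qb (t0/(t0+t))
    rw [dist_comm Rb Pb, e2, dist_comm Rb Qb, e3, e1, hd_x_w] at hE
    have key := alg2 (a := t0) (t := t) (D := u) (b := dist (γ 0) yu)
      (c := dist (γ (t0+t)) yu) ht0 ht hu hE
      (by rw [dist_comm]; rw [hdzyu] at hcomp; exact hcomp) dist_nonneg
    have c1 : compAngle (γ t0) (γ 0) yu =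
        Real.arccos ((t0^2 + u^2 - dist (γ 0) yu ^2) / (2*t0*u)) := by
      simp only [compAngle, hd_z_x, hdzyu]
    have c2 : compAngle (γ t0) (γ (t0+t)) yu =
        Real.arccos ((t^2 + u^2 - dist (γ (t0+t)) yu ^2) / (2*t*u)) := by
      simp only [compAngle, hd_z_w, hdzyu]
    rw [c1, c2]
    linarith
  linarith

/-- Lemma 4.3, curvature `≥ 0` case: asymptotic angle bound for shortest
paths to a compact set. -/
theorem asymptotic_angle_bound_of_curvGe {X : Type*} [MetricSpace X]
    [ProperSpace X]
    (hgeo : ∀ x y : X, ∃ γ : ℝ → X, IsUnitSpeedGeodesicOn γ (dist x y) ∧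
      γ 0 = x ∧ γ (dist x y) = y)
    (hcurv : ∀ p : X, ∃ U ∈ 𝓝 p, IsCurvGeRegion U)
    {K : Set X} (hK : IsCompact K) (hKne : K.Nonempty)
    {T : ℝ} (hT : 0 < T)
    (γ : ℝ → X) (hγ : IsUnitSpeedGeodesicOn γ T) (hγ0 : γ 0 ∉ K)
    (tn : ℕ → ℝ) (htn : ∀ n, tn n ∈ Set.Ioc (0:ℝ) T)
    (htn0 : Filter.Tendsto tn atTop (𝓝 0))
    (σn : ℕ → ℝ → X)
    (hσn : ∀ n, (∀ u ∈ Set.Icc (0:ℝ) 1, ∀ v ∈ Set.Icc (0:ℝ) 1,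
        dist (σn n u) (σn n v) = Metric.infDist (γ (tn n)) K * |u - v|) ∧
      σn n 0 = γ (tn n) ∧ σn n 1 ∈ K)
    (σ0 : ℝ → X)
    (hσ0 : (∀ u ∈ Set.Icc (0:ℝ) 1, ∀ v ∈ Set.Icc (0:ℝ) 1,
        dist (σ0 u) (σ0 v) = Metric.infDist (γ 0) K * |u - v|) ∧
      σ0 0 = γ 0 ∧ σ0 1 ∈ K)
    (hconv : TendstoUniformlyOn (fun n u => σn n u) σ0 atTop (Set.Icc 0 1)) :
    ∃ s' > (0:ℝ), ∀ s ∈ Set.Ioc (0:ℝ) s',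
      Filter.limsup (fun n => compAngle (γ (tn n)) (γ 0)
          (σn n (s / Metric.infDist (γ (tn n)) K))) atTop
        ≤ Real.pi - upperAngle γ (fun r => σ0 (r / Metric.infDist (γ 0) K)) := by
  obtain ⟨U, hUmem, hUreg⟩ := hcurv (γ 0)
  obtain ⟨ε, hε, hball⟩ := Metric.mem_nhds_iff.mp hUmem
  have hl0 : 0 < Metric.infDist (γ 0) K :=
    (hK.isClosed.notMem_iff_infDist_pos hKne).mp hγ0
  set l0 := Metric.infDist (γ 0) K with hl0def
  have h0T : (0:ℝ) ∈ Set.Icc (0:ℝ) T := ⟨le_rfl, hT.le⟩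
  have htnIcc : ∀ n, tn n ∈ Set.Icc (0:ℝ) T := fun n => ⟨(htn n).1.le, (htn n).2⟩
  have hdist_tn : ∀ n, dist (γ (tn n)) (γ 0) = tn n := by
    intro n
    rw [hγ _ (htnIcc n) 0 h0T, sub_zero, abs_of_pos (htn n).1]
  have hLip : ∀ n, |Metric.infDist (γ (tn n)) K - l0| ≤ tn n := by
    intro n
    rw [abs_sub_le_iff]
    constructor
    · have h := Metric.infDist_le_infDist_add_dist (x := γ (tn n)) (y := γ 0) (s := K)
      rw [hdist_tn n] at h; linarith
    · have h := Metric.infDist_le_infDist_add_dist (x := γ 0) (y := γ (tn n)) (s := K)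
      rw [dist_comm, hdist_tn n] at h; linarith
  have hln : Tendsto (fun n => Metric.infDist (γ (tn n)) K) atTop (𝓝 l0) := by
    rw [← tendsto_sub_nhds_zero_iff]
    exact squeeze_zero_norm (fun n => by simpa [Real.norm_eq_abs] using hLip n) htn0
  refine ⟨min (ε/4) (l0/2), lt_min (by linarith) (by linarith), ?_⟩
  intro s hsmem
  have hs : 0 < s := hsmem.1
  have hse : s ≤ ε/4 := hsmem.2.trans (min_le_left _ _)
  have hsl : s ≤ l0/2 := hsmem.2.trans (min_le_right _ _)
  set A : ℕ → ℝ := fun n => compAngle (γ (tn n)) (γ 0)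
      (σn n (s / Metric.infDist (γ (tn n)) K)) with hAdef
  have hA_nonneg : ∀ n, 0 ≤ A n := fun n => Real.arccos_nonneg _
  set δ : ℝ := min (ε/4) (T/2) with hδdef
  have hδpos : 0 < δ := lt_min (by linarith) (by linarith)
  -- The key per-(t,u) estimate
  have key : ∀ t u : ℝ, 0 < t → t < δ → 0 < u → u ≤ s →
      Filter.limsup A atTop ≤ Real.pi - compAngle (γ 0) (γ t) (σ0 (u / l0)) := by
    intro t u ht htδ hu hus
    have hul0 : u / l0 ∈ Set.Icc (0:ℝ) 1 :=
      ⟨by positivity, (div_le_one hl0).mpr (by linarith)⟩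
    have hev1 : ∀ᶠ n in atTop, tn n < min u (min (ε/4) (T/2)) :=
      htn0.eventually_lt_const (lt_min hu (lt_min (by linarith) (by linarith)))
    have hev2 : ∀ᶠ n in atTop, l0/2 < Metric.infDist (γ (tn n)) K :=
      hln.eventually_const_lt (by linarith)
    set B : ℕ → ℝ := fun n => compAngle (γ (tn n)) (γ (tn n + t))
        (σn n (u / Metric.infDist (γ (tn n)) K)) with hBdef
    have hB_nonneg : ∀ n, 0 ≤ B n := fun n => Real.arccos_nonneg _
    -- per-n inequality
    have hstep : ∀ᶠ n in atTop, A n ≤ Real.pi - B n := by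
      filter_upwards [hev1, hev2] with n h1 h2
      have h1u : tn n < u := lt_of_lt_of_le h1 (min_le_left _ _)
      have h1e : tn n < ε/4 := lt_of_lt_of_le h1 ((min_le_right _ _).trans (min_le_left _ _))
      have h1T : tn n < T/2 := lt_of_lt_of_le h1 ((min_le_right _ _).trans (min_le_right _ _))
      have hLn : 0 < Metric.infDist (γ (tn n)) K := by linarith
      apply step_main hUreg γ T hγ (σn n) _ hLn (hσn n).1 (tn n) t u s (hσn n).2.1
        (htn n).1 ht hu hus (by linarith)
        (by have h2' := htδ.trans_le (min_le_right (ε/4) (T/2)); linarith)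
        h1u
      · intro r hr
        apply hball
        rw [Metric.mem_ball]
        have hrT : r ∈ Set.Icc (0:ℝ) T := ⟨hr.1, by
          have h2' := htδ.trans_le (min_le_right (ε/4) (T/2)); linarith [hr.2]⟩
        rw [hγ r hrT 0 h0T, sub_zero, abs_of_nonneg hr.1]
        have h2' := htδ.trans_le (min_le_left (ε/4) (T/2))
        linarith [hr.2]
      · intro c hc
        apply hball
        rw [Metric.mem_ball]
        have hcL : c / Metric.infDist (γ (tn n)) K ∈ Set.Icc (0:ℝ) 1 :=
          ⟨div_nonneg hc.1 hLn.le, (div_le_one hLn).mpr (by linarith [hc.2])⟩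
        have hd : dist (σn n (c / Metric.infDist (γ (tn n)) K)) (σn n 0) = c := by
          rw [(hσn n).1 _ hcL 0 ⟨le_rfl, zero_le_one⟩, sub_zero,
            abs_of_nonneg (div_nonneg hc.1 hLn.le), mul_div_cancel₀ _ hLn.ne']
        calc dist (σn n (c / Metric.infDist (γ (tn n)) K)) (γ 0)
            ≤ dist (σn n (c / Metric.infDist (γ (tn n)) K)) (σn n 0)
              + dist (σn n 0) (γ 0) := dist_triangle _ _ _
          _ = c + tn n := by rw [hd, (hσn n).2.1, hdist_tn n]
          _ < ε := by linarith [hc.2]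
    -- limit of B
    have htT : t ∈ Set.Icc (0:ℝ) T := ⟨ht.le, by
      have := htδ.trans_le (min_le_right (ε/4) (T/2)); linarith⟩
    have hw : Tendsto (fun n => γ (tn n + t)) atTop (𝓝 (γ t)) := by
      rw [tendsto_iff_dist_tendsto_zero]
      apply squeeze_zero' (Eventually.of_forall fun n => dist_nonneg)
      · filter_upwards [hev1] with n h1
        have h1T : tn n < T/2 := lt_of_lt_of_le h1 ((min_le_right _ _).trans (min_le_right _ _))
        have h2' := htδ.trans_le (min_le_right (ε/4) (T/2))
        rw [hγ (tn n + t) ⟨by linarith [(htn n).1], by linarith⟩ t htT,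
          show tn n + t - t = tn n by ring, abs_of_pos (htn n).1]
      · exact htn0
    have hy : Tendsto (fun n => σn n (u / Metric.infDist (γ (tn n)) K)) atTop
        (𝓝 (σ0 (u / l0))) := by
      have hpt : Tendsto (fun n => σn n (u / l0)) atTop (𝓝 (σ0 (u / l0))) :=
        hconv.tendsto_at hul0
      rw [tendsto_iff_dist_tendsto_zero]
      apply squeeze_zero' (Eventually.of_forall fun n => dist_nonneg)
        (g := fun n => tn n + dist (σn n (u / l0)) (σ0 (u / l0)))
      · filter_upwards [hev2] with n h2
        have hLn : 0 < Metric.infDist (γ (tn n)) K := by linarith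
        have huln : u / Metric.infDist (γ (tn n)) K ∈ Set.Icc (0:ℝ) 1 :=
          ⟨by positivity, (div_le_one hLn).mpr (by linarith)⟩
        have hstep1 : dist (σn n (u / Metric.infDist (γ (tn n)) K)) (σn n (u / l0))
            ≤ tn n := by
          rw [(hσn n).1 _ huln _ hul0]
          rw [show u / Metric.infDist (γ (tn n)) K - u / l0
              = (l0 - Metric.infDist (γ (tn n)) K) * (u / (Metric.infDist (γ (tn n)) K * l0))
            from by field_simp]
          rw [abs_mul, abs_of_nonneg (by positivity : (0:ℝ) ≤ u / (Metric.infDist (γ (tn n)) K * l0))]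
          have hb : Metric.infDist (γ (tn n)) K * (u / (Metric.infDist (γ (tn n)) K * l0))
              = u / l0 := by field_simp
          calc Metric.infDist (γ (tn n)) K * (|l0 - Metric.infDist (γ (tn n)) K|
                * (u / (Metric.infDist (γ (tn n)) K * l0)))
              = |l0 - Metric.infDist (γ (tn n)) K| * (u / l0) := by
                rw [← mul_assoc, mul_comm (Metric.infDist (γ (tn n)) K) _, mul_assoc, hb]
            _ ≤ tn n * 1 := by
                apply mul_le_mul _ hul0.2 (by positivity) (by linarith [(htn n).1])
                rw [abs_sub_comm]; exact hLip n
            _ = tn n := mul_one _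
        calc dist (σn n (u / Metric.infDist (γ (tn n)) K)) (σ0 (u / l0))
            ≤ dist (σn n (u / Metric.infDist (γ (tn n)) K)) (σn n (u / l0))
              + dist (σn n (u / l0)) (σ0 (u / l0)) := dist_triangle _ _ _
          _ ≤ tn n + dist (σn n (u / l0)) (σ0 (u / l0)) := by linarith
      · have : Tendsto (fun n => dist (σn n (u / l0)) (σ0 (u / l0))) atTop (𝓝 0) := by
          have := tendsto_iff_dist_tendsto_zero.mp hpt
          exact this
        simpa using htn0.add this
    have hD : Tendsto (fun n => dist (γ (tn n + t)) (σn n (u / Metric.infDist (γ (tn n)) K)))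
        atTop (𝓝 (dist (γ t) (σ0 (u / l0)))) := hw.dist hy
    have hF : compAngle (γ 0) (γ t) (σ0 (u / l0)) =
        Real.arccos ((t^2 + u^2 - dist (γ t) (σ0 (u / l0))^2) / (2*t*u)) := by
      have e1 : dist (γ 0) (γ t) = t := by
        rw [hγ 0 h0T t htT, zero_sub, abs_neg, abs_of_pos ht]
      have e2 : dist (γ 0) (σ0 (u / l0)) = u := by
        rw [← hσ0.2.1, hσ0.1 0 ⟨le_rfl, zero_le_one⟩ _ hul0, zero_sub, abs_neg,
          abs_of_nonneg (div_nonneg hu.le hl0.le), mul_div_cancel₀ _ hl0.ne']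
      simp only [compAngle, e1, e2]
    have hBlim : Tendsto B atTop (𝓝 (compAngle (γ 0) (γ t) (σ0 (u / l0)))) := by
      rw [hF]
      have hcont : Tendsto (fun n => Real.arccos ((t^2 + u^2
          - dist (γ (tn n + t)) (σn n (u / Metric.infDist (γ (tn n)) K))^2) / (2*t*u)))
          atTop (𝓝 (Real.arccos ((t^2 + u^2 - dist (γ t) (σ0 (u / l0))^2) / (2*t*u)))) := by
        apply (Real.continuous_arccos.tendsto _).comp
        exact (tendsto_const_nhds.sub (hD.pow 2)).div_const _
      apply hcont.congr'
      filter_upwards [hev1, hev2] with n h1 h2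
      have hLn : 0 < Metric.infDist (γ (tn n)) K := by linarith
      have h1T : tn n < T/2 := lt_of_lt_of_le h1 ((min_le_right _ _).trans (min_le_right _ _))
      have h2' := htδ.trans_le (min_le_right (ε/4) (T/2))
      have e1 : dist (γ (tn n)) (γ (tn n + t)) = t := by
        rw [hγ _ (htnIcc n) _ ⟨by linarith [(htn n).1], by linarith⟩,
          show tn n - (tn n + t) = -t by ring, abs_neg, abs_of_pos ht]
      have huln : u / Metric.infDist (γ (tn n)) K ∈ Set.Icc (0:ℝ) 1 :=
        ⟨by positivity, (div_le_one hLn).mpr (by linarith)⟩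
      have e2 : dist (γ (tn n)) (σn n (u / Metric.infDist (γ (tn n)) K)) = u := by
        have h0 := (hσn n).1 0 ⟨le_rfl, zero_le_one⟩ _ huln
        rw [(hσn n).2.1] at h0
        rw [h0, zero_sub, abs_neg, abs_of_nonneg (div_nonneg hu.le hLn.le),
          mul_div_cancel₀ _ hLn.ne']
      show Real.arccos _ = B n
      simp only [hBdef, compAngle, e1, e2]
    -- combine
    have h1 : Filter.limsup A atTop ≤ Filter.limsup (fun n => Real.pi - B n) atTop :=
      Filter.limsup_le_limsup hstep (Filter.isCoboundedUnder_le_of_le atTop hA_nonneg)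
        (Filter.isBoundedUnder_of ⟨Real.pi, fun n => by linarith [hB_nonneg n]⟩)
    have h2 : Filter.limsup (fun n => Real.pi - B n) atTop
        = Real.pi - compAngle (γ 0) (γ t) (σ0 (u / l0)) :=
      (tendsto_const_nhds.sub hBlim).limsup_eq
    rw [h2] at h1
    exact h1
  -- conclude via the filter on (t, u)
  haveI : ((𝓝[>] (0:ℝ)) ×ˢ (𝓝[>] (0:ℝ))).NeBot := Filter.prod_neBot.mpr ⟨inferInstance, inferInstance⟩
  suffices hsuff : upperAngle γ (fun r => σ0 (r / l0)) ≤ Real.pi - Filter.limsup A atTop by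
    linarith
  unfold upperAngle
  apply Filter.limsup_le_of_le
  · exact Filter.isCoboundedUnder_le_of_le _ (fun p => Real.arccos_nonneg _)
  · filter_upwards [Filter.prod_mem_prod (Ioo_mem_nhdsGT_of_mem (by exact ⟨le_rfl, hδpos⟩))
      (Ioo_mem_nhdsGT_of_mem (by exact ⟨le_rfl, hs⟩))] with ts hts
    obtain ⟨ht1, ht2⟩ := hts
    have := key ts.1 ts.2 ht1.1 ht1.2 ht2.1 ht2.2.le
    linarith
end

section
/- First variation formula for the distance to a compact set, lower curvature bound (Theorem 4.4, curvature ≥ 0 case). Let X be a proper metric space in which every pair of points is joined by a unit-speed shortest path and in which every point has a neighborhood that is a region of curvature ≥ 0. Let K ⊆ X be compact and nonempty, let γ : [0,T] → X (T > 0) be a unit-speed geodesic with γ(0) ∉ K, and write ℓ(t) := Metric.infDist (γ(t)) K. Let ∠_min := inf { ∠⁺(γ, σ) : σ : [0, ℓ(0)] → X a unit-speed geodesic with σ(0) = γ(0) and σ(ℓ(0)) ∈ K } (this set of shortest paths from γ(0) to K is nonempty since X is proper and geodesic and K is compact, and the angles exist by Lemma 3.1, so ∠⁺ may be used). Then lim_{t→0⁺}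 (ℓ(t) − ℓ(0))/t = −cos(∠_min), i.e. Filter.Tendsto (fun t => (ℓ(t) − ℓ(0))/t) (𝓝[>] 0) (𝓝 (−Real.cos ∠_min)). -/
open Filter Topology Metric Set

section Prelude


lemma fv_cos_lip (a b : ℝ) : |Real.cos a - Real.cos b| ≤ |a - b| := by
  rw [Real.cos_sub_cos]
  have h1 : |Real.sin ((a+b)/2)| ≤ 1 := Real.abs_sin_le_one _
  have h2 : |Real.sin ((a-b)/2)| ≤ |(a-b)/2| := Real.abs_sin_le_abs
  rw [abs_mul, abs_mul, abs_neg]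
  have h3 : |(a-b)/2| = |a-b|/2 := by rw [abs_div]; norm_num
  have h4 : |(2:ℝ)| = 2 := by norm_num
  have h2' : |Real.sin ((a-b)/2)| ≤ |a-b|/2 := h3 ▸ h2
  rw [h4]
  nlinarith [abs_nonneg (Real.sin ((a+b)/2)), abs_nonneg (Real.sin ((a-b)/2)), abs_nonneg (a-b)]

variable {X : Type*} [MetricSpace X]

lemma fv_compAngle_nonneg (p x y : X) : 0 ≤ compAngle p x y := Real.arccos_nonneg _

lemma fv_compAngle_le_pi (p x y : X) : compAngle p x y ≤ Real.pi := Real.arccos_le_pi _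

lemma fv_ratio_bounds {p x y : X} (hx : 0 < dist p x) (hy : 0 < dist p y) :
    -1 ≤ (dist p x ^ 2 + dist p y ^ 2 - dist x y ^ 2) / (2 * dist p x * dist p y) ∧
    (dist p x ^ 2 + dist p y ^ 2 - dist x y ^ 2) / (2 * dist p x * dist p y) ≤ 1 := by
  have h1 : dist x y ≤ dist p x + dist p y := by
    have := dist_triangle x p y
    rwa [dist_comm x p] at this
  have h2 : dist p x ≤ dist p y + dist x y := by
    have := dist_triangle p y x
    rwa [dist_comm y x] at this
  have h3 : dist p y ≤ dist p x + dist x y := dist_triangle p x y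
  have hd : 0 ≤ dist x y := dist_nonneg
  constructor
  · rw [le_div_iff₀ (by positivity)]; nlinarith
  · rw [div_le_one (by positivity)]; nlinarith

lemma fv_cos_compAngle {p x y : X} (hx : 0 < dist p x) (hy : 0 < dist p y) :
    Real.cos (compAngle p x y)
      = (dist p x ^ 2 + dist p y ^ 2 - dist x y ^ 2) / (2 * dist p x * dist p y) := by
  obtain ⟨h1, h2⟩ := fv_ratio_bounds hx hy
  exact Real.cos_arccos h1 h2

lemma fv_dist_sq {p x y : X} (hx : 0 < dist p x) (hy : 0 < dist p y) :
    dist x y ^ 2 = dist p x ^ 2 + dist p y ^ 2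
      - 2 * dist p x * dist p y * Real.cos (compAngle p x y) := by
  rw [fv_cos_compAngle hx hy]
  field_simp
  ring


end Prelude
section E2

abbrev E2 := EuclideanSpace ℝ (Fin 2)

lemma fv_dist_sq_E2 (a b : E2) : dist a b ^ 2 = (a 0 - b 0)^2 + (a 1 - b 1)^2 := by
  rw [EuclideanSpace.dist_eq, Real.sq_sqrt (by positivity)]
  rw [Fin.sum_univ_two]
  simp [Real.dist_eq, sq_abs]

/-- Comparison triangle in the Euclidean plane, with an explicit formula
for distances from points on the first side to the third vertex. -/
lemma fv_comp_tri {d1 d2 d3 : ℝ} (h1 : 0 < d1) (h2 : 0 ≤ d2) (h3 : 0 ≤ d3)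
    (t1 : d2 ≤ d1 + d3) (t2 : d3 ≤ d1 + d2) (t3 : d1 ≤ d2 + d3) :
    ∃ xb yb zb : E2, dist xb yb = d1 ∧ dist xb zb = d2 ∧ dist yb zb = d3 ∧
      ∀ r : ℝ, dist (AffineMap.lineMap xb yb r) zb ^ 2
        = (r * d1)^2 + d2^2 - r * (d1^2 + d2^2 - d3^2) := by
  set zx : ℝ := (d1^2 + d2^2 - d3^2) / (2*d1) with hzx
  have hzx2 : zx ≤ d2 := by
    rw [hzx, div_le_iff₀ (by positivity)]; nlinarith
  have hzx1 : -d2 ≤ zx := by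
    rw [hzx, le_div_iff₀ (by positivity)]; nlinarith
  have hzxsq : zx^2 ≤ d2^2 := sq_le_sq' hzx1 hzx2
  set zy : ℝ := Real.sqrt (d2^2 - zx^2) with hzy
  have hzysq : zy^2 = d2^2 - zx^2 := Real.sq_sqrt (by linarith)
  have h2zx : 2 * d1 * zx = d1^2 + d2^2 - d3^2 := by
    rw [hzx]; field_simp
  refine ⟨0, EuclideanSpace.single 0 d1,
    EuclideanSpace.single 0 zx + EuclideanSpace.single 1 zy, ?_, ?_, ?_, ?_⟩
  · have : dist (0:E2) (EuclideanSpace.single 0 d1) ^ 2 = d1^2 := by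
      rw [fv_dist_sq_E2]; simp [EuclideanSpace.single_apply]
    have hd := dist_nonneg (x := (0:E2)) (y := EuclideanSpace.single 0 d1)
    nlinarith
  · have : dist (0:E2) (EuclideanSpace.single 0 zx + EuclideanSpace.single 1 zy) ^ 2 = d2^2 := by
      rw [fv_dist_sq_E2]; simp [EuclideanSpace.single_apply, PiLp.add_apply]
      linarith
    have hd := dist_nonneg (x := (0:E2)) (y := EuclideanSpace.single 0 zx + EuclideanSpace.single 1 zy)
    nlinarith
  · have : dist (EuclideanSpace.single (0 : Fin 2) d1)
        (EuclideanSpace.single 0 zx + EuclideanSpace.single 1 zy) ^ 2 = d3^2 := by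
      rw [fv_dist_sq_E2]; simp [EuclideanSpace.single_apply, PiLp.add_apply]
      linear_combination hzysq - h2zx
    have hd := dist_nonneg (x := EuclideanSpace.single (0:Fin 2) d1)
      (y := EuclideanSpace.single 0 zx + EuclideanSpace.single 1 zy)
    nlinarith
  · intro r
    rw [AffineMap.lineMap_apply_module]
    rw [fv_dist_sq_E2]
    simp [EuclideanSpace.single_apply, PiLp.add_apply, PiLp.smul_apply, smul_eq_mul]
    linear_combination hzysq - r * h2zx

end E2

section Key
variable {X : Type*} [MetricSpace X]

set_option maxHeartbeats 1000000 in
/-- Key comparison: in a region of curvature `≥ 0`, for a triangle with a chosen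
geodesic first side `c0` from `x` to `y`, the distance from a point on that side
to the vertex `z` is at least the Euclidean comparison value. -/
lemma fv_key {U : Set X} (hU : IsCurvGeRegion U) {x y z : X}
    (hx : x ∈ U) (hy : y ∈ U) (hz : z ∈ U)
    (c0 : ℝ → X) (h0g : IsUnitSpeedGeodesicOn c0 (dist x y)) (h00 : c0 0 = x)
    (h01 : c0 (dist x y) = y)
    (h0U : ∀ t ∈ Set.Icc (0:ℝ) (dist x y), c0 t ∈ U)
    (hxy : 0 < dist x y) (hxz : 0 < dist x z)
    {a : ℝ} (ha : a ∈ Set.Icc (0:ℝ) (dist x y)) :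
    a^2 + dist x z ^ 2 - (a / dist x y) * (dist x y ^ 2 + dist x z ^ 2 - dist y z ^ 2)
      ≤ dist (c0 a) z ^ 2 := by
  obtain ⟨c1, h1g, h10, h11, h1U⟩ := hU.1 x hx z hz
  obtain ⟨c2, h2g, h20, h21, h2U⟩ := hU.1 y hy z hz
  -- triangle inequalities
  have t1 : dist x z ≤ dist x y + dist y z := dist_triangle x y z
  have t2 : dist y z ≤ dist x y + dist x z := by
    have := dist_triangle y x z
    rwa [dist_comm y x] at this
  have t3 : dist x y ≤ dist x z + dist y z := by
    have := dist_triangle x z y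
    rwa [dist_comm z y] at this
  obtain ⟨xb, yb, zb, e1, e2, e3, hform⟩ :=
    fv_comp_tri hxy dist_nonneg dist_nonneg t1 t2 t3
  have htri := hU.2 x hx y hy z hz ![c0, c1, c2] ?_ xb yb zb e1 e2 e3 0 1 a (dist x z)
    (by simpa using ha) (by constructor <;> simp [hxz.le])
  · simp only [Matrix.cons_val_zero, Matrix.cons_val_one, Matrix.head_cons] at htri
    rw [h11, div_self (ne_of_gt hxz), AffineMap.lineMap_apply_one] at htri
    have hd : dist (AffineMap.lineMap xb yb (a / dist x y)) zb ≤ dist (c0 a) z := htri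
    have hsq : dist (AffineMap.lineMap xb yb (a / dist x y)) zb ^ 2 ≤ dist (c0 a) z ^ 2 :=
      pow_le_pow_left₀ dist_nonneg hd 2
    rw [hform (a / dist x y)] at hsq
    have hmul : a / dist x y * dist x y = a := div_mul_cancel₀ a (ne_of_gt hxy)
    rw [hmul] at hsq
    linarith
  · intro i
    fin_cases i
    · refine ⟨by simpa using h0g, by simpa using h00, by simpa using h01, by simpa using h0U⟩
    · refine ⟨by simpa using h1g, by simpa using h10, by simpa using h11, by simpa using h1U⟩
    · refine ⟨by simpa using h2g, by simpa using h20, by simpa using h21, by simpa using h2U⟩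

end Key

section L4
variable {X : Type*} [MetricSpace X]

/-- Curvature `≥ 0` gives: the cosines of the two adjacent comparison angles at an
interior point `p` of a geodesic (towards the two endpoints, against a fixed point `z`)
sum to a nonnegative quantity. -/
lemma fv_cos_sum {U : Set X} (hU : IsCurvGeRegion U) {p x y z : X}
    (hx : x ∈ U) (hy : y ∈ U) (hz : z ∈ U)
    {h t : ℝ} (hh : 0 < h) (ht : 0 < t)
    (c0 : ℝ → X) (h0g : IsUnitSpeedGeodesicOn c0 (h + t)) (h00 : c0 0 = x)
    (h01 : c0 (h + t) = y) (h0p : c0 h = p)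
    (h0U : ∀ c ∈ Set.Icc (0:ℝ) (h + t), c0 c ∈ U)
    (hu : 0 < dist p z) (hxz : 0 < dist x z) :
    0 ≤ Real.cos (compAngle p y z) + Real.cos (compAngle p x z) := by
  have hht : (0:ℝ) < h + t := by linarith
  have hIh : h ∈ Set.Icc (0:ℝ) (h+t) := ⟨hh.le, by linarith⟩
  have hI0 : (0:ℝ) ∈ Set.Icc (0:ℝ) (h+t) := ⟨le_refl _, hht.le⟩
  have hIht : (h+t) ∈ Set.Icc (0:ℝ) (h+t) := ⟨hht.le, le_refl _⟩
  have hdxy : dist x y = h + t := by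
    rw [← h00, ← h01, h0g 0 hI0 (h+t) hIht]
    rw [abs_of_nonpos (by linarith)]; ring
  have hdpx : dist p x = h := by
    rw [← h00, ← h0p, h0g h hIh 0 hI0]
    rw [abs_of_nonneg (by linarith)]; ring
  have hdpy : dist p y = t := by
    rw [← h01, ← h0p, h0g h hIh (h+t) hIht]
    rw [abs_of_nonpos (by linarith)]; ring
  -- key comparison with a = h
  have hkey := fv_key hU hx hy hz c0 (by rwa [hdxy]) h00 (by rw [hdxy]; exact h01)
    (by rwa [hdxy]) (by rwa [hdxy]) hxz (a := h) (by rwa [hdxy])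
  rw [h0p, hdxy] at hkey
  set u := dist p z with hu'
  set dxz := dist x z with hdxz'
  set dyz := dist y z with hdyz'
  -- cosines
  have hFG : Real.cos (compAngle p y z) = (t^2 + u^2 - dyz^2) / (2*t*u) := by
    rw [fv_cos_compAngle (by rw [hdpy]; exact ht) hu, hdpy]
  have hG : Real.cos (compAngle p x z) = (h^2 + u^2 - dxz^2) / (2*h*u) := by
    rw [fv_cos_compAngle (by rw [hdpx]; exact hh) hu, hdpx]
  rw [hFG, hG]
  have hQ : 0 ≤ (h+t)*u^2 + h*t*(h+t) - h*dyz^2 - t*dxz^2 := by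
    have hk2 : (h+t) * (h^2 + dxz^2 - (h / (h+t)) * ((h+t)^2 + dxz^2 - dyz^2))
        ≤ (h+t) * u^2 := by
      apply mul_le_mul_of_nonneg_left hkey hht.le
    have hexp : (h+t) * (h^2 + dxz^2 - (h / (h+t)) * ((h+t)^2 + dxz^2 - dyz^2))
        = (h+t)*h^2 + (h+t)*dxz^2 - h*((h+t)^2 + dxz^2 - dyz^2) := by
      field_simp
    rw [hexp] at hk2
    nlinarith
  have : (t^2 + u^2 - dyz^2) / (2*t*u) + (h^2 + u^2 - dxz^2) / (2*h*u)
      = ((h+t)*u^2 + h*t*(h+t) - h*dyz^2 - t*dxz^2) / (2*h*t*u) := by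
    field_simp; ring
  rw [this]
  positivity
end L4

section UA
variable {X : Type*} [MetricSpace X]
open Filter

lemma fv_upperAngle_nonneg (γ η : ℝ → X) : 0 ≤ upperAngle γ η := by
  apply Filter.le_limsup_of_frequently_le
  · exact Filter.Frequently.of_forall (fun p => fv_compAngle_nonneg _ _ _)
  · exact Filter.isBoundedUnder_of ⟨Real.pi, fun p => fv_compAngle_le_pi _ _ _⟩

lemma fv_upperAngle_le_pi (γ η : ℝ → X) : upperAngle γ η ≤ Real.pi := by
  apply Filter.limsup_le_of_le
  · exact (Filter.isBoundedUnder_of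
      ⟨0, fun p => fv_compAngle_nonneg _ _ _⟩ :
        IsBoundedUnder (· ≥ ·) _ _).isCoboundedUnder_le
  · exact Filter.Eventually.of_forall (fun p => fv_compAngle_le_pi _ _ _)

lemma fv_le_of_sq_le {a b : ℝ} (ha : 0 ≤ a) (hb : 0 ≤ b) (h : a^2 ≤ b^2) : a ≤ b := by
  nlinarith

end UA

section Upper
variable {X : Type*} [MetricSpace X]
open Filter

set_option maxHeartbeats 1000000 in
lemma fv_upper_slope {K : Set X} {T : ℝ} (hT : 0 < T)
    {γ : ℝ → X} (hγ : IsUnitSpeedGeodesicOn γ T) {σ : ℝ → X}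
    (hLpos : 0 < Metric.infDist (γ 0) K)
    (hσg : IsUnitSpeedGeodesicOn σ (Metric.infDist (γ 0) K)) (hσ0 : σ 0 = γ 0)
    (hσK : σ (Metric.infDist (γ 0) K) ∈ K) {ε : ℝ} (hε : 0 < ε) :
    ∀ᶠ t in 𝓝[>](0:ℝ),
      (Metric.infDist (γ t) K - Metric.infDist (γ 0) K)/t
        ≤ -Real.cos (upperAngle γ σ) + ε := by
  set L := Metric.infDist (γ 0) K with hL
  set α := upperAngle γ σ with hα
  have hα0 : 0 ≤ α := fv_upperAngle_nonneg γ σ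
  have hαpi : α ≤ Real.pi := fv_upperAngle_le_pi γ σ
  have hls : Filter.limsup (fun ts : ℝ × ℝ => compAngle (γ 0) (γ ts.1) (σ ts.2))
      ((𝓝[>] (0:ℝ)) ×ˢ (𝓝[>] (0:ℝ))) < α + ε/4 := by
    have : upperAngle γ σ < α + ε/4 := by rw [← hα]; linarith
    exact this
  have hev := Filter.eventually_lt_of_limsup_lt hls
    (Filter.isBoundedUnder_of ⟨Real.pi, fun p => fv_compAngle_le_pi _ _ _⟩)
  rw [Filter.eventually_prod_iff] at hev
  obtain ⟨pa, hpa, pb, hpb, himp⟩ := hev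
  obtain ⟨c2, hc2, hc2sub⟩ := mem_nhdsGT_iff_exists_Ioo_subset.1 hpb
  rw [Set.mem_Ioi] at hc2
  set u := min (c2/2) (L/2) with hu
  have hupos : 0 < u := lt_min (by linarith) (by linarith)
  have hul0 : u ≤ L := le_trans (min_le_right _ _) (by linarith)
  have hpbu : pb u := hc2sub ⟨hupos, lt_of_le_of_lt (min_le_left _ _) (by linarith)⟩
  have hσd : ∀ b ∈ Set.Icc (0:ℝ) L, dist (γ 0) (σ b) = b := by
    intro b hb
    rw [← hσ0, hσg 0 ⟨le_refl _, hLpos.le⟩ b hb, abs_of_nonpos (by linarith [hb.1])]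
    ring
  have hσu : dist (γ 0) (σ u) = u := hσd u ⟨hupos.le, hul0⟩
  have hσul : dist (σ u) (σ L) = L - u := by
    rw [hσg u ⟨hupos.le, hul0⟩ L ⟨hLpos.le, le_refl _⟩, abs_of_nonpos (by linarith)]
    ring
  clear_value u
  have hIoo : Set.Ioo (0:ℝ) (min (min (u/2) (ε/4*u)) (T/2)) ∈ 𝓝[>] (0:ℝ) := by
    apply Ioo_mem_nhdsGT_of_mem
    constructor
    · exact le_refl _
    · have h1 : 0 < u/2 := by linarith
      have h2 : 0 < ε/4*u := by positivity
      have h3 : 0 < T/2 := by linarith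
      exact lt_min (lt_min h1 h2) h3
  filter_upwards [hpa, hIoo] with t hpat htm
  obtain ⟨htpos, htlt⟩ := htm
  have htu2 : t < u/2 := lt_of_lt_of_le htlt (le_trans (min_le_left _ _) (min_le_left _ _))
  have htεu : t < ε/4*u := lt_of_lt_of_le htlt (le_trans (min_le_left _ _) (min_le_right _ _))
  have htT : t ≤ T := by
    have := lt_of_lt_of_le htlt (min_le_right _ _); linarith
  have hθ := himp hpat hpbu
  set θ := compAngle (γ 0) (γ t) (σ u) with hθdef
  have hθ0 : 0 ≤ θ := fv_compAngle_nonneg _ _ _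
  have hγt : dist (γ 0) (γ t) = t := by
    rw [hγ 0 ⟨le_refl _, hT.le⟩ t ⟨htpos.le, htT⟩, abs_of_nonpos (by linarith)]
    ring
  set c := Real.cos α - ε/2 with hc
  clear_value c
  have hcosθ : c ≤ Real.cos θ := by
    rcases le_or_gt α θ with hmθ | hmθ
    · have habs : |Real.cos θ - Real.cos α| ≤ |θ - α| := fv_cos_lip _ _
      have h1 : |θ - α| ≤ ε/2 := by
        rw [abs_of_nonneg (by linarith)]; linarith
      have := (abs_le.1 habs).1
      simp only [hc]; linarith
    · have : Real.cos α ≤ Real.cos θ :=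
        Real.cos_le_cos_of_nonneg_of_le_pi hθ0 hαpi hmθ.le
      simp only [hc]; linarith
  have hcle : c ≤ 1 := by
    have := Real.cos_le_one α; simp only [hc]; linarith
  have hd2 : dist (γ t) (σ u) ^2 = t^2 + u^2 - 2*t*u*Real.cos θ := by
    have h := fv_dist_sq (p := γ 0) (x := γ t) (y := σ u)
      (by rw [hγt]; exact htpos) (by rw [hσu]; exact hupos)
    rw [hγt, hσu] at h; exact h
  have hd2' : dist (γ t) (σ u)^2 ≤ t^2 + u^2 - 2*t*u*c := by
    have hmul := mul_le_mul_of_nonneg_left hcosθ (by positivity : (0:ℝ) ≤ 2*t*u)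
    linarith
  have htu : 0 ≤ t^2/u := by positivity
  have hRHSpos : 0 ≤ u - t*c + t^2/u := by
    have h1 : t*c ≤ t := by nlinarith
    linarith
  have hdle : dist (γ t) (σ u) ≤ u - t*c + t^2/u := by
    apply fv_le_of_sq_le dist_nonneg hRHSpos
    have key : (u - t*c + t^2/u)^2 - (t^2+u^2-2*t*u*c) = t^2*(1 + (c - t/u)^2) := by
      field_simp; ring
    nlinarith [sq_nonneg (c - t/u), sq_nonneg t]
  have hlt : Metric.infDist (γ t) K ≤ dist (γ t) (σ u) + (L - u) := by
    calc Metric.infDist (γ t) K ≤ dist (γ t) (σ L) := Metric.infDist_le_dist_of_mem hσK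
      _ ≤ dist (γ t) (σ u) + dist (σ u) (σ L) := dist_triangle _ _ _
      _ = dist (γ t) (σ u) + (L - u) := by rw [hσul]
  rw [div_le_iff₀ htpos]
  have hfin : Metric.infDist (γ t) K - L ≤ t*(-c) + t^2/u := by linarith
  have h2 : t^2/u ≤ t*(ε/4) := by
    rw [div_le_iff₀ hupos]; nlinarith
  simp only [hc] at hfin ⊢
  nlinarith
end Upper

section Back
variable {X : Type*} [MetricSpace X]
open Filter

set_option maxHeartbeats 1000000 in
lemma fv_back_slope {U : Set X} (hU : IsCurvGeRegion U)
    {K : Set X} {T : ℝ} {γ : ℝ → X} (hγ : IsUnitSpeedGeodesicOn γ T)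
    {R : ℝ} (hRU : Metric.closedBall (γ 0) R ⊆ U)
    {s t u h : ℝ} {σ : ℝ → X} {q : X} (hqK : q ∈ K)
    (hq : Metric.infDist (γ s) K = dist (γ s) q)
    (hσg : IsUnitSpeedGeodesicOn σ (dist (γ s) q)) (hσ0 : σ 0 = γ s)
    (hσq : σ (dist (γ s) q) = q)
    (hs : 0 < s) (ht : 0 < t) (hu : 0 < u) (hh : 0 < h)
    (hhs : h ≤ s) (hhu : h ≤ u/2)
    (hstT : s + t ≤ T) (huL : u ≤ dist (γ s) q) (hrange : s + t + u ≤ R) :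
    Metric.infDist (γ (s - h)) K - Metric.infDist (γ s) K
      ≤ h * (Real.cos (compAngle (γ s) (γ (s+t)) (σ u)) + h/u) := by
  have hsh0 : 0 ≤ s - h := by linarith
  have hsT : s ≤ T := by linarith
  have hshT : s - h ≤ T := by linarith
  have h0T : (0:ℝ) ∈ Set.Icc (0:ℝ) T := ⟨le_refl _, by linarith⟩
  have hγd : ∀ a b : ℝ, 0 ≤ a → a ≤ T → 0 ≤ b → b ≤ T → dist (γ a) (γ b) = |a - b| :=
    fun a b h1 h2 h3 h4 => hγ a ⟨h1, h2⟩ b ⟨h3, h4⟩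
  set L := dist (γ s) q with hLd
  have hLpos : 0 < L := lt_of_lt_of_le hu huL
  have hσd : ∀ a b : ℝ, 0 ≤ a → a ≤ L → 0 ≤ b → b ≤ L → dist (σ a) (σ b) = |a - b| :=
    fun a b h1 h2 h3 h4 => hσg a ⟨h1, h2⟩ b ⟨h3, h4⟩
  have hσu : dist (γ s) (σ u) = u := by
    rw [← hσ0, hσd 0 u (le_refl _) hLpos.le hu.le huL, abs_of_nonpos (by linarith)]; ring
  have hσuq : dist (σ u) q = L - u := by
    rw [← hσq, hσd u L hu.le huL hLpos.le (le_refl _), abs_of_nonpos (by linarith)]; ring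
  -- distances of the three triangle points to γ 0
  have hd0x : dist (γ (s-h)) (γ 0) ≤ R := by
    rw [dist_comm, hγd 0 (s-h) (le_refl _) (by linarith) hsh0 hshT,
      abs_of_nonpos (by linarith)]
    linarith
  have hd0y : dist (γ (s+t)) (γ 0) ≤ R := by
    rw [dist_comm, hγd 0 (s+t) (le_refl _) (by linarith) (by linarith) hstT,
      abs_of_nonpos (by linarith)]
    linarith
  have hd0z : dist (σ u) (γ 0) ≤ R := by
    have h1 : dist (σ u) (γ 0) ≤ dist (σ u) (γ s) + dist (γ s) (γ 0) := dist_triangle _ _ _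
    rw [dist_comm (σ u) (γ s), hσu] at h1
    rw [hγd s 0 hs.le hsT (le_refl _) (by linarith),
      abs_of_nonneg (show (0:ℝ) ≤ s - 0 by linarith)] at h1
    linarith
  -- the side of the triangle along γ
  set c0 : ℝ → X := fun c => γ (s - h + c) with hc0
  have hc0g : IsUnitSpeedGeodesicOn c0 (h + t) := by
    intro a ha b hb
    simp only [hc0]
    rw [hγd (s-h+a) (s-h+b) (by linarith [ha.1]) (by linarith [ha.2])
      (by linarith [hb.1]) (by linarith [hb.2])]
    congr 1; ring
  have hc0U : ∀ c ∈ Set.Icc (0:ℝ) (h + t), c0 c ∈ U := by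
    intro c hc
    apply hRU
    rw [Metric.mem_closedBall]
    simp only [hc0]
    rw [dist_comm, hγd 0 (s-h+c) (le_refl _) (by linarith) (by linarith [hc.1])
      (by linarith [hc.2]), abs_of_nonpos (by linarith [hc.1])]
    linarith [hc.2]
  have hxz : 0 < dist (γ (s-h)) (σ u) := by
    have h1 : dist (γ s) (σ u) ≤ dist (γ s) (γ (s-h)) + dist (γ (s-h)) (σ u) :=
      dist_triangle _ _ _
    rw [hσu, hγd s (s-h) hs.le hsT hsh0 hshT, abs_of_nonneg (by linarith)] at h1
    have : s - (s - h) = h := by ring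
    rw [this] at h1
    linarith
  have hsum := fv_cos_sum (p := γ s) (x := γ (s-h)) (y := γ (s+t)) (z := σ u) hU
    (hRU (Metric.mem_closedBall.2 hd0x)) (hRU (Metric.mem_closedBall.2 hd0y))
    (hRU (Metric.mem_closedBall.2 hd0z)) hh ht c0 hc0g
    (by simp only [hc0]; congr 1; ring)
    (by simp only [hc0]; congr 1; ring)
    (by simp only [hc0]; congr 1; ring)
    hc0U (by rw [hσu]; exact hu) hxz
  set F := Real.cos (compAngle (γ s) (γ (s+t)) (σ u)) with hF
  set G := Real.cos (compAngle (γ s) (γ (s-h)) (σ u)) with hG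
  have hF1 : F ≥ -1 := Real.neg_one_le_cos _
  have hF1' : F ≤ 1 := Real.cos_le_one _
  have hdsh : dist (γ s) (γ (s-h)) = h := by
    rw [hγd s (s-h) hs.le hsT hsh0 hshT, abs_of_nonneg (by linarith)]; ring
  have hd2 : dist (γ (s-h)) (σ u) ^ 2 = h^2 + u^2 - 2*h*u*G := by
    have hf := fv_dist_sq (p := γ s) (x := γ (s-h)) (y := σ u)
      (by rw [hdsh]; exact hh) (by rw [hσu]; exact hu)
    rw [hdsh, hσu] at hf
    exact hf
  clear_value F G
  have hGF : -F ≤ G := by linarith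
  have hd2' : dist (γ (s-h)) (σ u) ^ 2 ≤ h^2 + u^2 + 2*h*u*F := by
    have hmul := mul_le_mul_of_nonneg_left hGF (by positivity : (0:ℝ) ≤ 2*h*u)
    nlinarith
  have hRHS : (0:ℝ) ≤ u + h*F + h^2/u := by
    have h1 : 0 ≤ h^2/u := by positivity
    nlinarith
  have hdle : dist (γ (s-h)) (σ u) ≤ u + h*F + h^2/u := by
    apply fv_le_of_sq_le dist_nonneg hRHS
    have key : (u + h*F + h^2/u)^2 - (h^2 + u^2 + 2*h*u*F)
        = h^2*F^2 + (h*F + h^2/u)^2 - (h*F)^2 + h^2 := by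
      field_simp; ring
    nlinarith [sq_nonneg (h*F + h^2/u)]
  have hfin : Metric.infDist (γ (s-h)) K ≤ dist (γ (s-h)) (σ u) + (L - u) := by
    calc Metric.infDist (γ (s-h)) K ≤ dist (γ (s-h)) q := Metric.infDist_le_dist_of_mem hqK
      _ ≤ dist (γ (s-h)) (σ u) + dist (σ u) q := dist_triangle _ _ _
      _ = dist (γ (s-h)) (σ u) + (L - u) := by rw [hσuq]
  have hls : Metric.infDist (γ s) K = L := hq
  have hgoal : Metric.infDist (γ (s-h)) K - Metric.infDist (γ s) K ≤ h*F + h^2/u := by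
    rw [hls]; linarith
  have : h*F + h^2/u = h * (F + h/u) := by field_simp
  linarith [this ▸ hgoal]
end Back

section Key3
variable {X : Type*} [MetricSpace X] [ProperSpace X]
open Filter

set_option maxHeartbeats 2000000 in
lemma fv_key3 {K : Set X} (hK : IsCompact K)
    {T : ℝ} (hT : 0 < T) {γ : ℝ → X} (hγ : IsUnitSpeedGeodesicOn γ T)
    (hl0 : 0 < Metric.infDist (γ 0) K)
    (q : ℝ → X) (hqK : ∀ s, q s ∈ K)
    (hqd : ∀ s, Metric.infDist (γ s) K = dist (γ s) (q s))
    (σ : ℝ → ℝ → X) (hσg : ∀ s, IsUnitSpeedGeodesicOn (σ s) (dist (γ s) (q s)))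
    (hσ0 : ∀ s, σ s 0 = γ s) (hσq : ∀ s, σ s (dist (γ s) (q s)) = q s)
    {ρ : ℝ} (hρ : 0 < ρ) (hρT : ρ ≤ T/2) (hρl : ρ ≤ Metric.infDist (γ 0) K / 4)
    {m : ℝ}
    (hmub : ∀ τ : ℝ → X, IsUnitSpeedGeodesicOn τ (Metric.infDist (γ 0) K) →
      τ 0 = γ 0 → τ (Metric.infDist (γ 0) K) ∈ K → m ≤ upperAngle γ τ)
    {ε : ℝ} (hε : 0 < ε) :
    ∀ᶠ s in 𝓝[>](0:ℝ), ∃ t u : ℝ, 0 < t ∧ t ≤ ρ ∧ 0 < u ∧ u ≤ ρ ∧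
      m - ε < compAngle (γ s) (γ (s+t)) (σ s u) := by
  set L0 := Metric.infDist (γ 0) K with hL0
  by_contra hcon
  rw [Filter.not_eventually] at hcon
  have hcon' : ∃ᶠ s in 𝓝[>](0:ℝ), ∀ t u : ℝ, 0 < t → t ≤ ρ → 0 < u → u ≤ ρ →
      compAngle (γ s) (γ (s+t)) (σ s u) ≤ m - ε := by
    apply hcon.mono
    intro s hs t u h1 h2 h3 h4
    by_contra hlt
    exact hs ⟨t, u, h1, h2, h3, h4, lt_of_not_ge hlt⟩
  -- the ultrafilter
  have hNB : ((𝓝[>](0:ℝ)) ⊓ 𝓟 {s | ∀ t u : ℝ, 0 < t → t ≤ ρ → 0 < u → u ≤ ρ →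
      compAngle (γ s) (γ (s+t)) (σ s u) ≤ m - ε}).NeBot :=
    Filter.frequently_iff_neBot.1 hcon'
  set F := Ultrafilter.of ((𝓝[>](0:ℝ)) ⊓ 𝓟 {s | ∀ t u : ℝ, 0 < t → t ≤ ρ → 0 < u → u ≤ ρ →
      compAngle (γ s) (γ (s+t)) (σ s u) ≤ m - ε}) with hF
  have hF1 : (F : Filter ℝ) ≤ 𝓝[>](0:ℝ) := le_trans (Ultrafilter.of_le _) inf_le_left
  have hFBad : ∀ᶠ s in (F : Filter ℝ), ∀ t u : ℝ, 0 < t → t ≤ ρ → 0 < u → u ≤ ρ →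
      compAngle (γ s) (γ (s+t)) (σ s u) ≤ m - ε :=
    Filter.le_principal_iff.1 (le_trans (Ultrafilter.of_le _) inf_le_right)
  -- small s
  have hFsmall : ∀ δ : ℝ, 0 < δ → ∀ᶠ s in (F : Filter ℝ), 0 < s ∧ s < δ := by
    intro δ hδ
    have : Set.Ioo (0:ℝ) δ ∈ 𝓝[>](0:ℝ) := Ioo_mem_nhdsGT_of_mem ⟨le_refl _, hδ⟩
    filter_upwards [hF1 this] with s hs
    exact ⟨hs.1, hs.2⟩
  -- Lipschitz of infDist along γ
  have hinf_lip : ∀ x y : X, |Metric.infDist x K - Metric.infDist y K| ≤ dist x y := by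
    intro x y
    rw [abs_sub_le_iff]
    constructor
    · linarith [Metric.infDist_le_infDist_add_dist (s := K) (x := x) (y := y)]
    · rw [dist_comm]
      linarith [Metric.infDist_le_infDist_add_dist (s := K) (x := y) (y := x)]
  have hγ0s : ∀ s : ℝ, 0 ≤ s → s ≤ T → dist (γ s) (γ 0) = s := by
    intro s h1 h2
    rw [hγ s ⟨h1, h2⟩ 0 ⟨le_refl _, hT.le⟩, abs_of_nonneg (by linarith)]
    ring
  -- infDist (γ s) K tends to L0 along F
  have hvF : Filter.Tendsto (fun s => Metric.infDist (γ s) K) (F : Filter ℝ) (𝓝 L0) := by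
    rw [Metric.tendsto_nhds]
    intro δ hδ
    filter_upwards [hFsmall (min δ T) (lt_min hδ hT)] with s hs
    rw [Real.dist_eq]
    calc |Metric.infDist (γ s) K - L0| ≤ dist (γ s) (γ 0) := hinf_lip _ _
      _ = s := hγ0s s hs.1.le (le_of_lt (lt_of_lt_of_le hs.2 (min_le_right _ _)))
      _ < δ := lt_of_lt_of_le hs.2 (min_le_left _ _)
  have hvF' : Filter.Tendsto (fun s => dist (γ s) (q s)) (F : Filter ℝ) (𝓝 L0) := by
    apply hvF.congr
    intro s; exact hqd s
  -- the clamped parameter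
  set A : ℝ → ℝ → ℝ := fun s u => max 0 (min u (dist (γ s) (q s))) with hA
  have hAIcc : ∀ s u, A s u ∈ Set.Icc (0:ℝ) (dist (γ s) (q s)) := by
    intro s u
    constructor
    · exact le_max_left _ _
    · rw [max_le_iff]
      exact ⟨dist_nonneg, min_le_right _ _⟩
  have hAten : ∀ u : ℝ, 0 ≤ u → u ≤ L0 →
      Filter.Tendsto (fun s => A s u) (F : Filter ℝ) (𝓝 u) := by
    intro u h0 h1
    have h2 : Filter.Tendsto (fun s => min u (dist (γ s) (q s))) (F : Filter ℝ)
        (𝓝 (min u L0)) := Filter.Tendsto.min tendsto_const_nhds hvF'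
    have h3 := Filter.Tendsto.max (tendsto_const_nhds (x := (0:ℝ))) h2
    rw [min_eq_left h1, max_eq_right h0] at h3
    exact h3
  set τ : ℝ → ℝ → X := fun s u => σ s (A s u) with hτ
  have hτγ : ∀ s u, dist (γ s) (τ s u) = A s u := by
    intro s u
    simp only [hτ]
    rw [← hσ0 s, hσg s 0 ⟨le_refl _, dist_nonneg⟩ (A s u) (hAIcc s u),
      abs_of_nonpos (by linarith [(hAIcc s u).1])]
    ring
  -- compactness: limits of τ s u along F
  have hτC : ∀ u : ℝ, ∀ᶠ s in (F : Filter ℝ), τ s u ∈ Metric.closedBall (γ 0) (L0+2) := by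
    intro u
    filter_upwards [hFsmall (min (min L0 T) 1) (lt_min (lt_min hl0 hT) one_pos)] with s hs
    have hsT : s ≤ T := le_of_lt (lt_of_lt_of_le hs.2 (le_trans (min_le_left _ _) (min_le_right _ _)))
    have hs1 : s ≤ 1 := le_of_lt (lt_of_lt_of_le hs.2 (min_le_right _ _))
    rw [Metric.mem_closedBall]
    calc dist (τ s u) (γ 0) ≤ dist (τ s u) (γ s) + dist (γ s) (γ 0) := dist_triangle _ _ _
      _ = A s u + s := by
          rw [dist_comm (τ s u) (γ s), hτγ, hγ0s s hs.1.le hsT]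
      _ ≤ dist (γ s) (q s) + s := by linarith [(hAIcc s u).2]
      _ ≤ (L0 + s) + s := by
          have hlp := hinf_lip (γ s) (γ 0)
          rw [hqd s, ← hL0] at hlp
          have h2 := (abs_le.1 hlp).2
          rw [hγ0s s hs.1.le hsT] at h2
          linarith
      _ ≤ L0+2 := by linarith [hs1]
  -- limit geodesic via ultrafilter
  have hlim : ∀ u : ℝ, ∃ x : X, Filter.Tendsto (fun s => τ s u) (F : Filter ℝ) (𝓝 x) := by
    intro u
    have hle : (Ultrafilter.map (fun s => τ s u) F : Filter X)
        ≤ 𝓟 (Metric.closedBall (γ 0) (L0+2)) := by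
      rw [Filter.le_principal_iff, Ultrafilter.coe_map, Filter.mem_map]
      exact hτC u
    obtain ⟨x, -, hx⟩ := (isCompact_closedBall (γ 0) (L0+2)).ultrafilter_le_nhds
      (Ultrafilter.map (fun s => τ s u) F) hle
    rw [Ultrafilter.coe_map] at hx
    exact ⟨x, hx⟩
  set σs : ℝ → X := fun u => Classical.choose (hlim u) with hσs
  have hσst : ∀ u : ℝ, Filter.Tendsto (fun s => τ s u) (F : Filter ℝ) (𝓝 (σs u)) :=
    fun u => Classical.choose_spec (hlim u)
  -- geodesic property of the limit
  have hσsd : ∀ u ∈ Set.Icc (0:ℝ) L0, ∀ u' ∈ Set.Icc (0:ℝ) L0,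
      dist (σs u) (σs u') = |u - u'| := by
    intro u hu u' hu'
    have h1 : Filter.Tendsto (fun s => dist (τ s u) (τ s u')) (F : Filter ℝ)
        (𝓝 (dist (σs u) (σs u'))) := (hσst u).dist (hσst u')
    have h2 : Filter.Tendsto (fun s => dist (τ s u) (τ s u')) (F : Filter ℝ)
        (𝓝 |u - u'|) := by
      have heq : ∀ s, dist (τ s u) (τ s u') = |A s u - A s u'| := by
        intro s
        simp only [hτ]
        exact hσg s (A s u) (hAIcc s u) (A s u') (hAIcc s u')
      have h3 : Filter.Tendsto (fun s => |A s u - A s u'|) (F : Filter ℝ) (𝓝 |u - u'|) :=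
        ((hAten u hu.1 hu.2).sub (hAten u' hu'.1 hu'.2)).abs
      exact h3.congr (fun s => (heq s).symm)
    exact tendsto_nhds_unique h1 h2
  -- endpoints
  have hγsF : Filter.Tendsto (fun s => γ s) (F : Filter ℝ) (𝓝 (γ 0)) := by
    rw [Metric.tendsto_nhds]
    intro δ hδ
    filter_upwards [hFsmall (min δ T) (lt_min hδ hT)] with s hs
    rw [hγ0s s hs.1.le (le_of_lt (lt_of_lt_of_le hs.2 (min_le_right _ _)))]
    exact lt_of_lt_of_le hs.2 (min_le_left _ _)
  have hσs0 : σs 0 = γ 0 := by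
    have h1 : ∀ s, τ s 0 = γ s := by
      intro s
      simp only [hτ, hA]
      rw [min_eq_left dist_nonneg, max_self]
      exact hσ0 s
    exact tendsto_nhds_unique (hσst 0) (hγsF.congr (fun s => (h1 s).symm))
  have hσsK : σs L0 ∈ K := by
    have hqF : Filter.Tendsto (fun s => q s) (F : Filter ℝ) (𝓝 (σs L0)) := by
      rw [tendsto_iff_dist_tendsto_zero]
      have hb : ∀ s, dist (q s) (σs L0)
          ≤ (dist (γ s) (q s) - A s L0) + dist (τ s L0) (σs L0) := by
        intro s
        have h1 : dist (q s) (σs L0) ≤ dist (q s) (τ s L0) + dist (τ s L0) (σs L0) :=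
          dist_triangle _ _ _
        have h2 : dist (q s) (τ s L0) = dist (γ s) (q s) - A s L0 := by
          simp only [hτ]
          rw [← hσq s, hσg s (dist (γ s) (q s)) ⟨dist_nonneg, le_refl _⟩ (A s L0)
            (hAIcc s L0), abs_of_nonneg (by linarith [(hAIcc s L0).2]), hσq s]
        linarith [h2 ▸ h1]
      have hten : Filter.Tendsto
          (fun s => (dist (γ s) (q s) - A s L0) + dist (τ s L0) (σs L0))
          (F : Filter ℝ) (𝓝 0) := by
        have h3 : Filter.Tendsto (fun s => dist (γ s) (q s) - A s L0) (F : Filter ℝ)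
            (𝓝 0) := by
          have := hvF'.sub (hAten L0 hl0.le (le_refl _))
          simpa using this
        have h4 : Filter.Tendsto (fun s => dist (τ s L0) (σs L0)) (F : Filter ℝ)
            (𝓝 0) := by
          rw [← tendsto_iff_dist_tendsto_zero]
          exact hσst L0
        simpa using h3.add h4
      exact squeeze_zero (fun s => dist_nonneg) hb hten
    exact hK.isClosed.mem_of_tendsto hqF (Filter.Eventually.of_forall hqK)
  -- σs is an admissible competitor, hence m ≤ upperAngle γ σs
  have hmle : m ≤ upperAngle γ σs := by
    apply hmub σs _ hσs0 hσsK
    intro a ha b hb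
    exact hσsd a ha b hb
  -- but all small comparison angles of σs are ≤ m - ε
  have hang : ∀ t u : ℝ, 0 < t → t ≤ ρ → 0 < u → u ≤ ρ →
      compAngle (γ 0) (γ t) (σs u) ≤ m - ε := by
    intro t u ht htρ hu huρ
    -- distances converge
    have huL0 : u ≤ L0 := le_trans huρ (by linarith)
    have htT : t ≤ T := by linarith
    -- eventually σ s u = τ s u  and compAngle bound holds
    have hev : ∀ᶠ s in (F : Filter ℝ),
        (compAngle (γ s) (γ (s+t)) (τ s u) ≤ m - ε) ∧ 0 < s ∧ s < min (L0/2) (T/2) := by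
      filter_upwards [hFBad, hFsmall (min (L0/2) (T/2))
        (lt_min (by linarith) (by linarith))] with s hs hss
      refine ⟨?_, hss.1, hss.2⟩
      have hsT' : s ≤ T := by
        have := lt_of_lt_of_le hss.2 (min_le_right _ _); linarith
      have hsL : u ≤ dist (γ s) (q s) := by
        have hlp := hinf_lip (γ s) (γ 0)
        rw [hqd s, ← hL0] at hlp
        have h2 := (abs_le.1 hlp).1
        rw [hγ0s s hss.1.le hsT'] at h2
        have : s < L0/2 := lt_of_lt_of_le hss.2 (min_le_left _ _)
        have : L0/2 ≤ dist (γ s) (q s) := by linarith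
        linarith [hρl]
      have hτeq : τ s u = σ s u := by
        simp only [hτ, hA]
        rw [min_eq_left hsL, max_eq_right hu.le]
      rw [hτeq]
      exact hs t u ht htρ hu huρ
    -- the comparison angle converges
    have hγstF : Filter.Tendsto (fun s => γ (s + t)) (F : Filter ℝ) (𝓝 (γ t)) := by
      rw [Metric.tendsto_nhds]
      intro δ hδ
      filter_upwards [hFsmall (min δ (T - t)) (lt_min hδ (by linarith [hρT]))] with s hs
      have h1 : s + t ≤ T := by
        have := lt_of_lt_of_le hs.2 (min_le_right _ _); linarith
      rw [hγ (s+t) ⟨by linarith [hs.1], h1⟩ t ⟨ht.le, htT⟩, abs_of_nonneg (by linarith [hs.1])]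
      have := lt_of_lt_of_le hs.2 (min_le_left _ _); linarith
    have hdyzF : Filter.Tendsto (fun s => dist (γ (s+t)) (τ s u)) (F : Filter ℝ)
        (𝓝 (dist (γ t) (σs u))) := hγstF.dist (hσst u)
    have hAuF : Filter.Tendsto (fun s => A s u) (F : Filter ℝ) (𝓝 u) :=
      hAten u hu.le huL0
    -- the arccos argument converges
    have hargF : Filter.Tendsto
        (fun s => (t^2 + (A s u)^2 - (dist (γ (s+t)) (τ s u))^2) / (2 * t * A s u))
        (F : Filter ℝ)
        (𝓝 ((t^2 + u^2 - (dist (γ t) (σs u))^2) / (2 * t * u))) := by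
      apply Filter.Tendsto.div
      · exact (tendsto_const_nhds.add ((hAuF.pow 2))).sub (hdyzF.pow 2)
      · exact (tendsto_const_nhds.mul hAuF)
      · positivity
    have hcompF : Filter.Tendsto
        (fun s => compAngle (γ s) (γ (s+t)) (τ s u)) (F : Filter ℝ)
        (𝓝 (compAngle (γ 0) (γ t) (σs u))) := by
      have harg : compAngle (γ 0) (γ t) (σs u)
          = Real.arccos ((t^2 + u^2 - (dist (γ t) (σs u))^2) / (2 * t * u)) := by
        simp only [compAngle]
        have e1 : dist (γ 0) (γ t) = t := by
          rw [dist_comm]; exact hγ0s t ht.le htT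
        have e2 : dist (γ 0) (σs u) = u := by
          rw [← hσs0, hσsd 0 ⟨le_refl _, hl0.le⟩ u ⟨hu.le, huL0⟩,
            abs_of_nonpos (by linarith)]
          ring
        rw [e1, e2]
      rw [harg]
      have h5 : Filter.Tendsto
          (fun s => Real.arccos ((t^2 + (A s u)^2 - (dist (γ (s+t)) (τ s u))^2)
            / (2 * t * A s u))) (F : Filter ℝ)
          (𝓝 (Real.arccos ((t^2 + u^2 - (dist (γ t) (σs u))^2) / (2 * t * u)))) :=
        (Real.continuous_arccos.continuousAt.tendsto).comp hargF
      apply Filter.Tendsto.congr' _ h5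
      filter_upwards [hev] with s hs
      have heA : dist (γ s) (τ s u) = A s u := hτγ s u
      have heg : dist (γ s) (γ (s+t)) = t := by
        have h1 : s + t ≤ T := by
          have := lt_of_lt_of_le hs.2.2 (min_le_right _ _); linarith
        rw [hγ s ⟨hs.2.1.le, by linarith⟩ (s+t) ⟨by linarith [hs.2.1], h1⟩,
          abs_of_nonpos (by linarith)]
        ring
      simp only [compAngle]
      rw [heA, heg]
    -- pass to the limit
    have := le_of_tendsto hcompF (hev.mono (fun s hs => hs.1))
    exact this
  -- upperAngle γ σs ≤ m - ε : contradiction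
  have hub : upperAngle γ σs ≤ m - ε := by
    apply Filter.limsup_le_of_le
    · exact (Filter.isBoundedUnder_of
        ⟨0, fun p => fv_compAngle_nonneg _ _ _⟩ :
          Filter.IsBoundedUnder (· ≥ ·) _ _).isCoboundedUnder_le
    · have hmem : (Set.Ioo (0:ℝ) ρ) ×ˢ (Set.Ioo (0:ℝ) ρ)
          ∈ (𝓝[>](0:ℝ)) ×ˢ (𝓝[>](0:ℝ)) :=
        Filter.prod_mem_prod (Ioo_mem_nhdsGT_of_mem ⟨le_refl _, hρ⟩)
          (Ioo_mem_nhdsGT_of_mem ⟨le_refl _, hρ⟩)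
      filter_upwards [hmem] with p hp
      exact hang p.1 p.2 hp.1.1 hp.1.2.le hp.2.1 hp.2.2.le
  linarith

end Key3


set_option maxHeartbeats 4000000 in
/-- Theorem 4.4, curvature `≥ 0` case: the first variation formula for the
distance to a compact set. -/
theorem first_variation_compact_set_of_curvGe {X : Type*} [MetricSpace X]
    [ProperSpace X]
    (hgeo : ∀ x y : X, ∃ γ : ℝ → X, IsUnitSpeedGeodesicOn γ (dist x y) ∧
      γ 0 = x ∧ γ (dist x y) = y)
    (hcurv : ∀ p : X, ∃ U ∈ 𝓝 p, IsCurvGeRegion U)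
    {K : Set X} (hK : IsCompact K) (hKne : K.Nonempty)
    {T : ℝ} (hT : 0 < T)
    (γ : ℝ → X) (hγ : IsUnitSpeedGeodesicOn γ T) (hγ0 : γ 0 ∉ K) :
    Filter.Tendsto
      (fun t : ℝ => (Metric.infDist (γ t) K - Metric.infDist (γ 0) K) / t)
      (𝓝[>] (0:ℝ))
      (𝓝 (-Real.cos (sInf {a : ℝ | ∃ σ : ℝ → X,
        IsUnitSpeedGeodesicOn σ (Metric.infDist (γ 0) K) ∧ σ 0 = γ 0 ∧
        σ (Metric.infDist (γ 0) K) ∈ K ∧ a = upperAngle γ σ}))) := by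
  classical
  set S := {a : ℝ | ∃ σ : ℝ → X,
    IsUnitSpeedGeodesicOn σ (Metric.infDist (γ 0) K) ∧ σ 0 = γ 0 ∧
    σ (Metric.infDist (γ 0) K) ∈ K ∧ a = upperAngle γ σ} with hSdef
  have hl0 : 0 < Metric.infDist (γ 0) K :=
    (hK.isClosed.notMem_iff_infDist_pos hKne).1 hγ0
  -- basic facts about S
  have hSne : S.Nonempty := by
    obtain ⟨q0, hq0K, hq0d⟩ := hK.exists_infDist_eq_dist hKne (γ 0)
    obtain ⟨σ', hg', h0', he'⟩ := hgeo (γ 0) q0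
    rw [← hq0d] at hg' he'
    exact ⟨upperAngle γ σ', σ', hg', h0', he' ▸ hq0K, rfl⟩
  have hSbd : BddBelow S := by
    refine ⟨0, fun a ha => ?_⟩
    obtain ⟨σ', -, -, -, rfl⟩ := ha
    exact fv_upperAngle_nonneg γ σ'
  set m := sInf S with hmdef
  have hm0 : 0 ≤ m := by
    apply le_csInf hSne
    intro a ha
    obtain ⟨σ', -, -, -, rfl⟩ := ha
    exact fv_upperAngle_nonneg γ σ'
  have hmpi : m ≤ Real.pi := by
    obtain ⟨a, ha⟩ := hSne
    have h1 : m ≤ a := csInf_le hSbd ha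
    obtain ⟨σ', -, -, -, rfl⟩ := ha
    exact le_trans h1 (fv_upperAngle_le_pi γ σ')
  -- Lipschitz
  have hinf_lip : ∀ x y : X, |Metric.infDist x K - Metric.infDist y K| ≤ dist x y := by
    intro x y
    rw [abs_sub_le_iff]
    constructor
    · linarith [Metric.infDist_le_infDist_add_dist (s := K) (x := x) (y := y)]
    · rw [dist_comm]
      linarith [Metric.infDist_le_infDist_add_dist (s := K) (x := y) (y := x)]
  have hγ0s : ∀ s : ℝ, 0 ≤ s → s ≤ T → dist (γ s) (γ 0) = s := by
    intro s h1 h2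
    rw [hγ s ⟨h1, h2⟩ 0 ⟨le_refl _, hT.le⟩, abs_of_nonneg (by linarith)]
    ring
  -- upper bound
  have hupper : ∀ ε : ℝ, 0 < ε → ∀ᶠ t in 𝓝[>](0:ℝ),
      (Metric.infDist (γ t) K - Metric.infDist (γ 0) K) / t ≤ -Real.cos m + ε := by
    intro ε hε
    obtain ⟨a, haS, ham⟩ := exists_lt_of_csInf_lt hSne
      (show sInf S < m + ε/2 by rw [← hmdef]; linarith)
    obtain ⟨σ', hg', h0', hK', heq⟩ := haS
    have hma : m ≤ a := csInf_le hSbd ⟨σ', hg', h0', hK', heq⟩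
    have hcos : -Real.cos (upperAngle γ σ') ≤ -Real.cos m + ε/2 := by
      have h1 := fv_cos_lip (upperAngle γ σ') m
      rw [← heq] at h1 ⊢
      have h2 : |a - m| ≤ ε/2 := by rw [abs_of_nonneg (by linarith)]; linarith
      have := (abs_le.1 h1).2
      linarith [(abs_le.1 h1).1, this]
    filter_upwards [fv_upper_slope hT hγ hl0 hg' h0' hK' (half_pos hε)] with t h1
    calc (Metric.infDist (γ t) K - Metric.infDist (γ 0) K) / t
        ≤ -Real.cos (upperAngle γ σ') + ε/2 := h1
      _ ≤ -Real.cos m + ε := by linarith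
  -- choice of feet and geodesics to K
  have hqex : ∀ s : ℝ, ∃ y, y ∈ K ∧ Metric.infDist (γ s) K = dist (γ s) y := by
    intro s
    obtain ⟨y, h1, h2⟩ := hK.exists_infDist_eq_dist hKne (γ s)
    exact ⟨y, h1, h2⟩
  choose q hqK hqd using hqex
  have hσex : ∀ s : ℝ, ∃ σ' : ℝ → X, IsUnitSpeedGeodesicOn σ' (dist (γ s) (q s)) ∧
      σ' 0 = γ s ∧ σ' (dist (γ s) (q s)) = q s := fun s => hgeo (γ s) (q s)
  choose sig hσg hσ0' hσq using hσex
  -- region around γ 0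
  obtain ⟨U, hUn, hU⟩ := hcurv (γ 0)
  obtain ⟨R, hRpos, hRU⟩ := Metric.nhds_basis_closedBall.mem_iff.1 hUn
  set ρ := min (min (R/4) (T/4)) (Metric.infDist (γ 0) K / 4) with hρdef
  have hρpos : 0 < ρ := by
    refine lt_min (lt_min ?_ ?_) ?_ <;> linarith
  have hρR : ρ ≤ R/4 := le_trans (min_le_left _ _) (min_le_left _ _)
  have hρT : ρ ≤ T/4 := le_trans (min_le_left _ _) (min_le_right _ _)
  have hρl : ρ ≤ Metric.infDist (γ 0) K / 4 := min_le_right _ _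
  -- lower bound
  have hlower : ∀ ε : ℝ, 0 < ε → ∀ᶠ t in 𝓝[>](0:ℝ),
      -Real.cos m - ε ≤ (Metric.infDist (γ t) K - Metric.infDist (γ 0) K) / t := by
    intro ε hε
    set ε' := ε/4 with hε'def
    have hε' : 0 < ε' := by rw [hε'def]; linarith
    have hmub : ∀ τ : ℝ → X, IsUnitSpeedGeodesicOn τ (Metric.infDist (γ 0) K) →
        τ 0 = γ 0 → τ (Metric.infDist (γ 0) K) ∈ K → m ≤ upperAngle γ τ := by
      intro τ h1 h2 h3
      exact csInf_le hSbd ⟨τ, h1, h2, h3, rfl⟩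
    have hkey3 := fv_key3 hK hT hγ hl0 q hqK hqd sig hσg hσ0' hσq hρpos
      (by linarith) hρl hmub hε'
    obtain ⟨δ, hδpos, hδsub⟩ := mem_nhdsGT_iff_exists_Ioo_subset.1 hkey3
    rw [Set.mem_Ioi] at hδpos
    set δ' := min δ ρ with hδ'def
    have hδ'pos : 0 < δ' := lt_min hδpos hρpos
    -- backward slope bound at every point of (0, δ')
    have hslope : ∀ s : ℝ, 0 < s → s < δ' → ∀ᶠ h in 𝓝[>](0:ℝ),
        Metric.infDist (γ (s - h)) K - Metric.infDist (γ s) K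
          ≤ h * (Real.cos m + 2*ε') := by
      intro s hs hsδ
      have hsρ : s < ρ := lt_of_lt_of_le hsδ (min_le_right _ _)
      obtain ⟨t, u, ht, htρ, hu, huρ, hθ⟩ :=
        hδsub ⟨hs, lt_of_lt_of_le hsδ (min_le_left _ _)⟩
      set θ := compAngle (γ s) (γ (s+t)) (sig s u) with hθdef
      have hθ0 : 0 ≤ θ := fv_compAngle_nonneg _ _ _
      have hθpi : θ ≤ Real.pi := fv_compAngle_le_pi _ _ _
      have hcosθ : Real.cos θ ≤ Real.cos m + ε' := by
        rcases le_or_gt m θ with h1 | h1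
        · have := Real.cos_le_cos_of_nonneg_of_le_pi hm0 hθpi h1
          linarith
        · have h2 := fv_cos_lip θ m
          have h3 : |θ - m| ≤ ε' := by
            rw [abs_of_nonpos (by linarith)]; linarith
          linarith [(abs_le.1 h2).2]
      have hsT : s ≤ T := by linarith
      have huL : u ≤ dist (γ s) (q s) := by
        have hlp := hinf_lip (γ s) (γ 0)
        rw [hqd s] at hlp
        have h2 := (abs_le.1 hlp).1
        rw [hγ0s s hs.le hsT] at h2
        linarith
      have hIoo : Set.Ioo (0:ℝ) (min (min s (u/2)) (ε'*u)) ∈ 𝓝[>](0:ℝ) := by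
        apply Ioo_mem_nhdsGT_of_mem
        refine ⟨le_refl _, ?_⟩
        apply lt_min (lt_min hs (by linarith))
        positivity
      filter_upwards [hIoo] with h hh
      obtain ⟨hhpos, hhlt⟩ := hh
      have hhs : h ≤ s := le_of_lt (lt_of_lt_of_le hhlt
        (le_trans (min_le_left _ _) (min_le_left _ _)))
      have hhu : h ≤ u/2 := le_of_lt (lt_of_lt_of_le hhlt
        (le_trans (min_le_left _ _) (min_le_right _ _)))
      have hhεu : h ≤ ε'*u := le_of_lt (lt_of_lt_of_le hhlt (min_le_right _ _))
      have hback := fv_back_slope hU hγ hRU (hqK s) (hqd s) (hσg s) (hσ0' s) (hσq s)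
        hs ht hu hhpos hhs hhu (by linarith) huL (by linarith)
      rw [← hθdef] at hback
      have hdiv : h/u ≤ ε' := by
        rw [div_le_iff₀ hu]; nlinarith
      calc Metric.infDist (γ (s - h)) K - Metric.infDist (γ s) K
          ≤ h * (Real.cos θ + h/u) := hback
        _ ≤ h * (Real.cos m + 2*ε') := by
            apply mul_le_mul_of_nonneg_left _ hhpos.le
            linarith
    -- integrate the slope bound
    have hγcont : ContinuousOn γ (Set.Icc 0 T) := by
      apply LipschitzOnWith.continuousOn (K := 1)
      apply LipschitzOnWith.of_dist_le_mul
      intro a ha b hb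
      rw [hγ a ha b hb, Real.dist_eq]
      simp
    filter_upwards [Ioo_mem_nhdsGT_of_mem
      (Set.left_mem_Ico.2 hδ'pos : (0:ℝ) ∈ Set.Ico 0 δ'), self_mem_nhdsWithin]
      with s₀ hs₀m hs₀pos
    obtain ⟨-, hs₀δ⟩ := hs₀m
    replace hs₀pos : 0 < s₀ := hs₀pos
    have hs₀T : s₀ ≤ T := by
      have : s₀ < ρ := lt_of_lt_of_le hs₀δ (min_le_right _ _)
      linarith
    set C := Real.cos m + 2*ε' with hCdef
    have hfcont : ContinuousOn (fun x : ℝ => Metric.infDist (γ (s₀ - x)) K)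
        (Set.Icc 0 s₀) := by
      apply (continuous_infDist_pt K).comp_continuousOn
      apply hγcont.comp ((continuous_const.sub continuous_id).continuousOn)
      intro x hx
      constructor
      · simp only [Set.mem_Icc] at hx; simp; linarith [hx.2]
      · simp only [Set.mem_Icc] at hx; simp; linarith [hx.1]
    have hmvt := image_le_of_liminf_slope_right_le_deriv_boundary
      (f := fun x : ℝ => Metric.infDist (γ (s₀ - x)) K) (a := 0) (b := s₀)
      hfcont
      (B := fun x : ℝ => Metric.infDist (γ s₀) K + C * x) (B' := fun _ => C)
      (by norm_num)
      (by fun_prop)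
      (fun x hx => by
        simpa using (((hasDerivWithinAt_id x (Set.Ici x)).const_mul C).const_add
          (Metric.infDist (γ s₀) K)))
      ?_ (Set.right_mem_Icc.2 hs₀pos.le)
    · -- conclude
      simp only [sub_self] at hmvt
      rw [le_div_iff₀ hs₀pos]
      simp only [hCdef, hε'def] at hmvt
      nlinarith
    · -- the slope bound
      intro x hx r hr
      obtain ⟨hx0, hxs⟩ := hx
      have hsx : 0 < s₀ - x := by linarith
      have hsxδ : s₀ - x < δ' := by linarith
      have hmap : Filter.Tendsto (fun z => z - x) (𝓝[>] x) (𝓝[>] (0:ℝ)) := by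
        apply tendsto_nhdsWithin_of_tendsto_nhds_of_eventually_within
        · have h1 : Filter.Tendsto (fun z : ℝ => z - x) (𝓝 x) (𝓝 (x - x)) :=
            (continuous_id.sub continuous_const).tendsto x
          rw [sub_self] at h1
          exact h1.mono_left nhdsWithin_le_nhds
        · filter_upwards [self_mem_nhdsWithin] with z hz
          simp only [Set.mem_Ioi] at hz ⊢
          linarith
      have hev2 := hmap.eventually (hslope (s₀ - x) hsx hsxδ)
      apply Filter.Eventually.frequently
      filter_upwards [hev2, self_mem_nhdsWithin] with z hz hz2
      simp only [Set.mem_Ioi] at hz2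
      rw [slope_def_field]
      have harg : s₀ - x - (z - x) = s₀ - z := by ring
      rw [harg] at hz
      have hC' : (Metric.infDist (γ (s₀ - z)) K - Metric.infDist (γ (s₀ - x)) K)
          / (z - x) ≤ C := by
        rw [div_le_iff₀ (by linarith)]
        calc Metric.infDist (γ (s₀ - z)) K - Metric.infDist (γ (s₀ - x)) K
            ≤ (z - x) * C := hz
          _ = C * (z - x) := by ring
      calc (Metric.infDist (γ (s₀ - z)) K - Metric.infDist (γ (s₀ - x)) K) / (z - x)
          ≤ C := hC'
        _ < r := hr
  -- combine
  rw [Metric.tendsto_nhds]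
  intro ε hε
  filter_upwards [hupper (ε/2) (by linarith), hlower (ε/2) (by linarith)] with t h1 h2
  rw [Real.dist_eq, abs_lt]
  exact ⟨by linarith, by linarith⟩
end

section
/- Two-variable monotone convergence (Appendix Lemma B.1). Let f : ℝ → ℝ → ℝ and a ∈ ℝ. Suppose that for every r ∈ ℝ the functions x ↦ f x r and x ↦ f r x are monotone nondecreasing, and suppose that f is bounded below on (a, a+ε) × (a, a+ε) for some ε > 0. Then the right-sided limit superior and limit inferior of f at (a, a) coincide; that is, the limsup and liminf of (x, y) ↦ f x y along the filter (𝓝[>] a) ×ˢ (𝓝[>] a) are equal, and consequently there exists L ∈ ℝ with Filter.Tendsto (fun p : ℝ × ℝ => f p.1 p.2) ((𝓝[>] a) ×ˢ (𝓝[>] a)) (𝓝 L). (The nonincreasing case follows by symmetry; the boundedness hypothesis, used implicitly in the paper, guarantees the common value is a real number.) -/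
open Filter Topology Metric Set

/-- Appendix Lemma B.1: a component-wise monotone nondecreasing function of
two real variables, bounded below near `(a, a)` from the right, has equal
right-sided limsup and liminf at `(a, a)`, hence a right-sided limit. -/
theorem two_variable_monotone_limit (f : ℝ → ℝ → ℝ) (a : ℝ)
    (hmono : ∀ r : ℝ, Monotone (fun x => f x r) ∧ Monotone (fun x => f r x))
    (hbdd : ∃ ε > (0:ℝ), ∃ C : ℝ, ∀ x ∈ Set.Ioo a (a + ε),
      ∀ y ∈ Set.Ioo a (a + ε), C ≤ f x y) :
    Filter.limsup (fun p : ℝ × ℝ => f p.1 p.2) ((𝓝[>] a) ×ˢ (𝓝[>] a))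
      = Filter.liminf (fun p : ℝ × ℝ => f p.1 p.2) ((𝓝[>] a) ×ˢ (𝓝[>] a)) ∧
    ∃ L : ℝ, Filter.Tendsto (fun p : ℝ × ℝ => f p.1 p.2)
      ((𝓝[>] a) ×ˢ (𝓝[>] a)) (𝓝 L) := by
  obtain ⟨ε, hε, C, hC⟩ := hbdd
  set g : ℝ → ℝ := fun x => f x x with hg
  have gmono : Monotone g := fun x y hxy =>
    le_trans ((hmono x).2 hxy) ((hmono y).1 hxy)
  have hb : ∀ x ∈ Ioi a, C ≤ g x := by
    intro x hx
    have hx' : min x (a + ε/2) ∈ Ioo a (a + ε) := by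
      constructor
      · exact lt_min hx (by linarith)
      · exact lt_of_le_of_lt (min_le_right _ _) (by linarith)
    exact le_trans (hC _ hx' _ hx') (gmono (min_le_left _ _))
  have hbdd' : BddBelow (g '' Ioi a) := ⟨C, by rintro _ ⟨x, hx, rfl⟩; exact hb x hx⟩
  set L := sInf (g '' Ioi a) with hL
  have hgL : Tendsto g (𝓝[>] a) (𝓝 L) :=
    (gmono.monotoneOn _).tendsto_nhdsGT hbdd'
  -- min and max tend to 𝓝[>] a
  have hmin : Tendsto (fun p : ℝ × ℝ => min p.1 p.2) ((𝓝[>] a) ×ˢ (𝓝[>] a)) (𝓝[>] a) := by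
    rw [tendsto_nhdsWithin_iff]
    constructor
    · have h1 : Tendsto (fun p : ℝ × ℝ => min p.1 p.2) (𝓝 (a, a)) (𝓝 a) := by
        simpa [Function.comp_def] using (continuous_min.comp (continuous_fst.prodMk continuous_snd)).tendsto (a, a)
      exact h1.mono_left (by rw [nhds_prod_eq]; exact prod_mono nhdsWithin_le_nhds nhdsWithin_le_nhds)

    · filter_upwards [prod_mem_prod self_mem_nhdsWithin self_mem_nhdsWithin] with p hp
      exact lt_min (mem_Ioi.mp hp.1) (mem_Ioi.mp hp.2)
  have hmax : Tendsto (fun p : ℝ × ℝ => max p.1 p.2) ((𝓝[>] a) ×ˢ (𝓝[>] a)) (𝓝[>] a) := by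
    rw [tendsto_nhdsWithin_iff]
    constructor
    · have h1 : Tendsto (fun p : ℝ × ℝ => max p.1 p.2) (𝓝 (a, a)) (𝓝 a) := by
        simpa [Function.comp_def] using (continuous_max.comp (continuous_fst.prodMk continuous_snd)).tendsto (a, a)
      exact h1.mono_left (by rw [nhds_prod_eq]; exact prod_mono nhdsWithin_le_nhds nhdsWithin_le_nhds)

    · filter_upwards [prod_mem_prod self_mem_nhdsWithin self_mem_nhdsWithin] with p hp
      exact lt_of_lt_of_le (mem_Ioi.mp hp.1) (le_max_left _ _)
  have hlow : ∀ p : ℝ × ℝ, g (min p.1 p.2) ≤ f p.1 p.2 := by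
    intro ⟨x, y⟩
    calc g (min x y) ≤ f x (min x y) := (hmono (min x y)).1 (min_le_left _ _)
    _ ≤ f x y := (hmono x).2 (min_le_right _ _)
  have hhigh : ∀ p : ℝ × ℝ, f p.1 p.2 ≤ g (max p.1 p.2) := by
    intro ⟨x, y⟩
    calc f x y ≤ f (max x y) y := (hmono y).1 (le_max_left _ _)
    _ ≤ g (max x y) := (hmono (max x y)).2 (le_max_right _ _)
  have htend : Tendsto (fun p : ℝ × ℝ => f p.1 p.2) ((𝓝[>] a) ×ˢ (𝓝[>] a)) (𝓝 L) :=
    tendsto_of_tendsto_of_tendsto_of_le_of_le (hgL.comp hmin) (hgL.comp hmax)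
      (fun p => hlow p) (fun p => hhigh p)
  exact ⟨htend.limsup_eq.trans htend.liminf_eq.symm, L, htend⟩
end
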